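/- arXiv:0907.3264 — 6 statements merged into one kernel-verified Lean document; each statement's English description precedes it below -/
import Mathlib

section
/- Let Φ be a root system in a Euclidean space with basis Δ and W-invariant inner product (·|·), and let λ be a dominant weight (i.e. (λ|α) ≥ 0 for all α ∈ Δ). Suppose β₁, β₂, …, β_m ∈ Δ are distinct simple roots such that (λ|β₁) ≠ 0 and for every i ≤ m there exists j < i with (β_i|β_j) ≠ 0. Then for every l ≤ m, the weight r_{β_l} r_{β_{l-1}} ⋯ r_{β_1}(λ) equals λ − Σᵢ c_i β_i with c_i > 0 for all i ≤ l and c_i = 0 for i > l; in particular its support (the set of simple roots appearing with nonzero coefficient in λ minus the weight) is exactly {β₁, …, β_l}. -/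
open scoped RealInnerProductSpace

/-- The reflection `r_β(v) = v - 2(v|β)/(β|β) β` associated with a root `β`. -/
noncomputable def reflectRoot {V : Type*} [NormedAddCommGroup V] [InnerProductSpace ℝ V]
    (β v : V) : V :=
  v - (2 * ⟪v, β⟫ / ⟪β, β⟫) • β

/-- if `λ` is dominant, `β₁,…,β_m` are distinct simple roots with `(λ|β₁) ≠ 0`
and each `β_i` non-orthogonal to some earlier `β_j`, then for every `l ≤ m`,
`r_{β_l}⋯r_{β_1}(λ) = λ - ∑ c_i β_i` with `c_i > 0` for `i ≤ l` and `c_i = 0` for `i > l`;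
in particular its support is exactly `{β₁,…,β_l}`. -/
theorem satake_lemma_admissibility_chain
    {V : Type*} [NormedAddCommGroup V] [InnerProductSpace ℝ V]
    (Δ : Finset V) (lam : V) (m : ℕ) (β : Fin m → V)
    (hβΔ : ∀ i, β i ∈ Δ) (hβinj : Function.Injective β)
    (hroots_ne : ∀ α ∈ Δ, α ≠ 0)
    (hobtuse : ∀ α ∈ Δ, ∀ γ ∈ Δ, α ≠ γ → ⟪α, γ⟫ ≤ 0)
    (hdom : ∀ α ∈ Δ, 0 ≤ ⟪lam, α⟫)
    (h1 : ∀ h : 0 < m, ⟪lam, β ⟨0, h⟩⟫ ≠ 0)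
    (hchain : ∀ i : Fin m, 0 < (i : ℕ) →
      ∃ j : Fin m, (j : ℕ) < (i : ℕ) ∧ ⟪β i, β j⟫ ≠ 0)
    (w : ℕ → V) (hw0 : w 0 = lam)
    (hwsucc : ∀ (l : ℕ) (hl : l < m), w (l + 1) = reflectRoot (β ⟨l, hl⟩) (w l)) :
    ∀ l : ℕ, l ≤ m → ∃ c : Fin m → ℝ,
      w l = lam - ∑ i, c i • β i ∧
      (∀ i : Fin m, (i : ℕ) < l → 0 < c i) ∧
      (∀ i : Fin m, l ≤ (i : ℕ) → c i = 0) := by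
  intro l
  induction l with
  | zero =>
    intro _
    exact ⟨0, by simp [hw0], fun i hi => by omega, fun i _ => rfl⟩
  | succ l ih =>
    intro hl1
    have hl : l < m := hl1
    obtain ⟨c, hwl, hpos, hzero⟩ := ih (le_of_lt hl)
    set b := β ⟨l, hl⟩ with hb
    have hQ : (0:ℝ) < ⟪b, b⟫ :=
      lt_of_le_of_ne real_inner_self_nonneg
        (Ne.symm (inner_self_ne_zero.mpr (hroots_ne b (hβΔ _))))
    have hterm : ∀ i : Fin m, c i * ⟪β i, b⟫ ≤ 0 := by
      intro i
      rcases lt_or_ge (i : ℕ) l with h | h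
      · have hne : β i ≠ b := by
          intro hE
          have : (i : ℕ) = l := by simpa [Fin.ext_iff] using hβinj hE
          omega
        exact mul_nonpos_of_nonneg_of_nonpos (hpos i h).le
          (hobtuse _ (hβΔ i) _ (hβΔ _) hne)
      · simp [hzero i h]
    have hcalc : ⟪w l, b⟫ = ⟪lam, b⟫ - ∑ i, c i * ⟪β i, b⟫ := by
      rw [hwl]
      simp [inner_sub_left, sum_inner, real_inner_smul_left]
    have hinner : 0 < ⟪w l, b⟫ := by
      rcases Nat.eq_zero_or_pos l with h0 | h0
      · have hlam : (0:ℝ) < ⟪lam, b⟫ := by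
          refine lt_of_le_of_ne (hdom b (hβΔ _)) (Ne.symm ?_)
          subst h0
          exact h1 hl
        have hsum : ∑ i, c i * ⟪β i, b⟫ ≤ 0 :=
          Finset.sum_nonpos fun i _ => hterm i
        rw [hcalc]; linarith
      · obtain ⟨j, hjl0, hjne⟩ := hchain ⟨l, hl⟩ h0
        have hjl : (j : ℕ) < l := by simpa using hjl0
        have hsum : ∑ i, c i * ⟪β i, b⟫ < 0 := by
          have h2 : ∑ i, c i * ⟪β i, b⟫ < ∑ _i : Fin m, (0:ℝ) := by
            refine Finset.sum_lt_sum (fun i _ => hterm i)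
              ⟨j, Finset.mem_univ _, ?_⟩
            have hne : β j ≠ b := by
              intro hE
              have : (j : ℕ) = l := by simpa [Fin.ext_iff] using hβinj hE
              omega
            have hlt : ⟪β j, b⟫ < 0 := by
              refine lt_of_le_of_ne (hobtuse _ (hβΔ j) _ (hβΔ _) hne) ?_
              rw [real_inner_comm]
              exact hjne
            exact mul_neg_of_pos_of_neg (hpos j hjl) hlt
          simpa using h2
        have hlam := hdom b (hβΔ _)
        rw [hcalc]; linarith
    set t := 2 * ⟪w l, b⟫ / ⟪b, b⟫ with ht
    have htpos : 0 < t := div_pos (by linarith) hQ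
    refine ⟨fun i => if i = ⟨l, hl⟩ then t else c i, ?_, ?_, ?_⟩
    · rw [hwsucc l hl, reflectRoot]
      have hsplit : ∑ i, (if i = (⟨l, hl⟩ : Fin m) then t else c i) • β i
          = ∑ i, c i • β i + t • b := by
        have : ∀ i : Fin m, (if i = (⟨l, hl⟩ : Fin m) then t else c i) • β i
            = c i • β i + (if i = (⟨l, hl⟩ : Fin m) then t • b else 0) := by
          intro i
          by_cases h : i = ⟨l, hl⟩
          · subst h
            simp [hzero ⟨l, hl⟩ le_rfl, hb]
          · simp [h]
        rw [Finset.sum_congr rfl fun i _ => this i, Finset.sum_add_distrib,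
          Finset.sum_ite_eq' Finset.univ (⟨l, hl⟩ : Fin m)]
        simp
      rw [hsplit, ← hb, ← ht, hwl]
      abel
    · intro i hi
      by_cases h : i = ⟨l, hl⟩
      · simp [h, htpos]
      · have hil : (i : ℕ) < l := by
          have : (i : ℕ) ≠ l := fun hE => h (Fin.ext hE)
          omega
        simp [h, hpos i hil]
    · intro i hi
      have h : i ≠ ⟨l, hl⟩ := by
        intro hE
        subst hE
        simp at hi
      simp [h, hzero i (by omega)]
end

section
/- Let k be a non-Archimedean valued field, V a finite-dimensional k-vector space, and x a seminorm on V diagonalized by the basis (e₀, …, e_d). Define j(x) on the polynomial ring k[X₀,…,X_d] (viewed as the symmetric algebra of V with Xᵢ corresponding to eᵢ) by |Σ_ν a_ν X^ν|(j(x)) = max_ν |a_ν| ∏ᵢ |eᵢ|(x)^{νᵢ}. Then for every multiplicative seminorm z on k[X₀,…,X_d] whose restriction to the degree-one part V coincides with x, one has |f|(z) ≤ |f|(j(x)) for all f ∈ k[X₀,…,X_d]. Consequently j(x) does not depend on the choice of diagonalizing basis. -/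
open MvPolynomial

/-- A multiplicative (non-Archimedean) seminorm on the polynomial algebra `k[X₀,…,X_d]`,
extending the absolute value of `k`. -/
def IsMultSeminorm {k : Type*} [NormedField k] {d : ℕ}
    (z : MvPolynomial (Fin (d + 1)) k → NNReal) : Prop :=
  (∀ f g, z (f * g) = z f * z g) ∧
  (∀ f g, z (f + g) ≤ max (z f) (z g)) ∧
  (∀ a : k, z (C a) = ‖a‖₊)

/-- `z` restricts, on the degree-one part `V` (linear polynomials, with `Xᵢ ↔ eᵢ`), to the
seminorm diagonalized by the basis `(e₀,…,e_d)` with values `r i = |eᵢ|(x)`. -/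
def RestrictsToDiag {k : Type*} [NormedField k] {d : ℕ}
    (z : MvPolynomial (Fin (d + 1)) k → NNReal) (r : Fin (d + 1) → NNReal) : Prop :=
  ∀ c : Fin (d + 1) → k,
    z (∑ i, C (c i) * X i) = Finset.univ.sup (fun i => ‖c i‖₊ * r i)

section GaussAux

variable {k : Type*} [NontriviallyNormedField k] {d : ℕ}

/-- non-Archimedean inequality for the `NNReal`-valued norm. -/
lemma gauss_na (hna : ∀ a b : k, ‖a + b‖ ≤ max ‖a‖ ‖b‖) (a b : k) :
    ‖a + b‖₊ ≤ max ‖a‖₊ ‖b‖₊ := by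
  have := hna a b
  rw [← NNReal.coe_le_coe]
  push_cast
  simpa using this

lemma gauss_na_sum (hna : ∀ a b : k, ‖a + b‖ ≤ max ‖a‖ ‖b‖) {ι : Type*} (s : Finset ι)
    (φ : ι → k) : ‖∑ i ∈ s, φ i‖₊ ≤ s.sup fun i => ‖φ i‖₊ := by
  induction s using Finset.cons_induction with
  | empty => simp
  | cons i s hi ih =>
    rw [Finset.sum_cons, Finset.sup_cons]
    exact (gauss_na hna _ _).trans (max_le_max le_rfl ih)

lemma gauss_na_add_eq (hna : ∀ a b : k, ‖a + b‖ ≤ max ‖a‖ ‖b‖) {a b : k}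
    (h : ‖b‖₊ < ‖a‖₊) : ‖a + b‖₊ = ‖a‖₊ := by
  refine le_antisymm ((gauss_na hna a b).trans (max_le le_rfl h.le)) ?_
  by_contra hc
  push_neg at hc
  have h2 : ‖a‖₊ ≤ max ‖a + b‖₊ ‖b‖₊ := by
    have := gauss_na hna (a + b) (-b)
    simpa using this
  exact absurd h2 (not_le.mpr (max_lt hc h))

variable (r : Fin (d + 1) → NNReal)

/-- The weight of a monomial. -/
noncomputable def Pw (ν : Fin (d + 1) →₀ ℕ) : NNReal := ∏ i, r i ^ ν i

lemma Pw_add (μ μ' : Fin (d + 1) →₀ ℕ) : Pw r (μ + μ') = Pw r μ * Pw r μ' := by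
  simp [Pw, pow_add, Finset.prod_mul_distrib]

lemma Pw_zero : Pw r 0 = 1 := by simp [Pw]

lemma Pw_single (i : Fin (d + 1)) : Pw r (Finsupp.single i 1) = r i := by
  rw [Pw, Finset.prod_eq_single i]
  · simp
  · intro j _ hj
    simp [Finsupp.single_apply, Ne.symm hj]
  · simp

/-- The Gauss seminorm. -/
noncomputable def G (f : MvPolynomial (Fin (d + 1)) k) : NNReal :=
  f.support.sup fun ν => ‖f.coeff ν‖₊ * Pw r ν

lemma G_def (f : MvPolynomial (Fin (d + 1)) k) :
    G r f = f.support.sup fun ν => ‖f.coeff ν‖₊ * Pw r ν := rfl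

lemma G_sup_superset (f : MvPolynomial (Fin (d + 1)) k) {T : Finset (Fin (d + 1) →₀ ℕ)}
    (hT : f.support ⊆ T) :
    T.sup (fun ν => ‖f.coeff ν‖₊ * Pw r ν) = G r f := by
  rw [G_def]
  refine le_antisymm (Finset.sup_le fun ν hν => ?_) (Finset.sup_mono hT)
  by_cases h : ν ∈ f.support
  · exact Finset.le_sup (f := fun ν => ‖f.coeff ν‖₊ * Pw r ν) h
  · rw [notMem_support_iff] at h
    rw [h]
    simp

lemma G_term_le (f : MvPolynomial (Fin (d + 1)) k) (ν : Fin (d + 1) →₀ ℕ) :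
    ‖f.coeff ν‖₊ * Pw r ν ≤ G r f := by
  rw [G_def]
  by_cases h : ν ∈ f.support
  · exact Finset.le_sup (f := fun ν => ‖f.coeff ν‖₊ * Pw r ν) h
  · rw [notMem_support_iff] at h
    rw [h]
    simp

lemma G_C (a : k) : G r (C a) = ‖a‖₊ := by
  have hT : (C a : MvPolynomial (Fin (d + 1)) k).support ⊆ {0} := by
    intro ν hν
    rw [mem_support_iff, coeff_C] at hν
    simp only [Finset.mem_singleton]
    by_contra h
    exact hν (if_neg fun he => h he.symm)
  rw [← G_sup_superset r (C a) hT, Finset.sup_singleton]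
  rw [show (C a : MvPolynomial (Fin (d + 1)) k).coeff 0 = a from coeff_zero_C a, Pw_zero, mul_one]

lemma G_add_le (hna : ∀ a b : k, ‖a + b‖ ≤ max ‖a‖ ‖b‖) (f g : MvPolynomial (Fin (d + 1)) k) :
    G r (f + g) ≤ max (G r f) (G r g) := by
  refine Finset.sup_le fun ν hν => ?_
  have h1 : ‖(f + g).coeff ν‖₊ ≤ max ‖f.coeff ν‖₊ ‖g.coeff ν‖₊ := by
    rw [coeff_add]; exact gauss_na hna _ _
  have h2 : ‖(f + g).coeff ν‖₊ * Pw r ν ≤ max ‖f.coeff ν‖₊ ‖g.coeff ν‖₊ * Pw r ν :=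
    mul_le_mul_left h1 _
  rcases max_cases ‖f.coeff ν‖₊ ‖g.coeff ν‖₊ with ⟨h, -⟩ | ⟨h, -⟩ <;> rw [h] at h2
  · exact h2.trans ((G_term_le r f ν).trans (le_max_left _ _))
  · exact h2.trans ((G_term_le r g ν).trans (le_max_right _ _))

lemma coeff_linear (c : Fin (d + 1) → k) (ν : Fin (d + 1) →₀ ℕ) :
    (∑ i, C (c i) * X i : MvPolynomial (Fin (d + 1)) k).coeff ν =
      ∑ i, c i * (if Finsupp.single i 1 = ν then 1 else 0) := by
  rw [show ((∑ i, C (c i) * X i : MvPolynomial (Fin (d + 1)) k).coeff ν) =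
    MvPolynomial.coeff ν (∑ i, C (c i) * X i) from rfl, coeff_sum]
  refine Finset.sum_congr rfl fun i _ => ?_
  rw [coeff_C_mul, coeff_X']

lemma G_restricts (c : Fin (d + 1) → k) :
    G r (∑ i, C (c i) * X i) = Finset.univ.sup (fun i => ‖c i‖₊ * r i) := by
  set f : MvPolynomial (Fin (d + 1)) k := ∑ i, C (c i) * X i with hf
  have hT : f.support ⊆ Finset.univ.image (fun i => Finsupp.single i (1 : ℕ)) := by
    intro ν hν
    rw [mem_support_iff] at hν
    by_contra h
    apply hν
    rw [hf, coeff_linear]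
    refine Finset.sum_eq_zero fun i _ => ?_
    have : ¬ (Finsupp.single i 1 = ν) := by
      intro he
      exact h (Finset.mem_image.mpr ⟨i, Finset.mem_univ i, he⟩)
    simp [this]
  rw [← G_sup_superset r f hT, Finset.sup_image]
  refine Finset.sup_congr rfl fun i _ => ?_
  have hcoeff : f.coeff (Finsupp.single i 1) = c i := by
    rw [hf, coeff_linear]
    have : ∀ j : Fin (d + 1),
        (if Finsupp.single j (1 : ℕ) = Finsupp.single i 1 then (1 : k) else 0) =
          (if j = i then 1 else 0) := by
      intro j
      simp [Finsupp.single_left_inj (one_ne_zero (α := ℕ))]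
    simp only [this, mul_ite, mul_one, mul_zero, Finset.sum_ite_eq', Finset.mem_univ, if_true]
  simp only [Function.comp, hcoeff, Pw_single]

lemma G_mul (hna : ∀ a b : k, ‖a + b‖ ≤ max ‖a‖ ‖b‖) (f g : MvPolynomial (Fin (d + 1)) k) :
    G r (f * g) = G r f * G r g := by
  classical
  -- upper bound
  have hterm : ∀ (p : (Fin (d + 1) →₀ ℕ) × (Fin (d + 1) →₀ ℕ)) (ν : Fin (d + 1) →₀ ℕ),
      p.1 + p.2 = ν → ‖f.coeff p.1 * g.coeff p.2‖₊ * Pw r ν ≤ G r f * G r g := by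
    intro p ν hp
    rw [← hp, Pw_add, nnnorm_mul, mul_mul_mul_comm]
    exact mul_le_mul' (G_term_le r f p.1) (G_term_le r g p.2)
  have hle : G r (f * g) ≤ G r f * G r g := by
    refine Finset.sup_le fun ν hν => ?_
    rcases Finset.eq_empty_or_nonempty (Finset.HasAntidiagonal.antidiagonal ν) with he | hne
    · have : (f * g).coeff ν = 0 := by
        rw [show (f * g).coeff ν = MvPolynomial.coeff ν (f * g) from rfl, coeff_mul, he,
          Finset.sum_empty]
      simp [this]
    · obtain ⟨p, hp, hsup⟩ := Finset.exists_mem_eq_sup _ hne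
        (fun p => ‖f.coeff p.1 * g.coeff p.2‖₊)
      have h1 : ‖(f * g).coeff ν‖₊ ≤ ‖f.coeff p.1 * g.coeff p.2‖₊ := by
        rw [show (f * g).coeff ν = MvPolynomial.coeff ν (f * g) from rfl, coeff_mul]
        exact (gauss_na_sum hna _ _).trans_eq hsup
      exact (mul_le_mul_left h1 _).trans (hterm p ν (Finset.HasAntidiagonal.mem_antidiagonal.mp hp))
  refine le_antisymm hle ?_
  rcases eq_or_ne (G r f * G r g) 0 with h0 | h0
  · rw [h0]; exact zero_le
  have hf0 : G r f ≠ 0 := fun h => h0 (by rw [h, zero_mul])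
  have hg0 : G r g ≠ 0 := fun h => h0 (by rw [h, mul_zero])
  -- supports are nonempty
  have hfs : f.support.Nonempty := by
    rcases Finset.eq_empty_or_nonempty f.support with he | h
    · exact absurd (by rw [G_def, he, Finset.sup_empty, bot_eq_zero']) hf0
    · exact h
  have hgs : g.support.Nonempty := by
    rcases Finset.eq_empty_or_nonempty g.support with he | h
    · exact absurd (by rw [G_def, he, Finset.sup_empty, bot_eq_zero']) hg0
    · exact h
  -- the argmax sets
  set Af := f.support.filter (fun ν => ‖f.coeff ν‖₊ * Pw r ν = G r f) with hAf
  set Ag := g.support.filter (fun ν => ‖g.coeff ν‖₊ * Pw r ν = G r g) with hAg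
  have hAfne : Af.Nonempty := by
    obtain ⟨μ, hμ, hμs⟩ := Finset.exists_mem_eq_sup _ hfs (fun ν => ‖f.coeff ν‖₊ * Pw r ν)
    exact ⟨μ, Finset.mem_filter.mpr ⟨hμ, hμs.symm⟩⟩
  have hAgne : Ag.Nonempty := by
    obtain ⟨μ, hμ, hμs⟩ := Finset.exists_mem_eq_sup _ hgs (fun ν => ‖g.coeff ν‖₊ * Pw r ν)
    exact ⟨μ, Finset.mem_filter.mpr ⟨hμ, hμs.symm⟩⟩
  obtain ⟨μ₀, hμ₀, hμ₀max⟩ := Finset.exists_max_image Af (fun ν => toLex ν) hAfne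
  obtain ⟨μ₁, hμ₁, hμ₁max⟩ := Finset.exists_max_image Ag (fun ν => toLex ν) hAgne
  have hval₀ : ‖f.coeff μ₀‖₊ * Pw r μ₀ = G r f := (Finset.mem_filter.mp hμ₀).2
  have hval₁ : ‖g.coeff μ₁‖₊ * Pw r μ₁ = G r g := (Finset.mem_filter.mp hμ₁).2
  -- strict bounds beyond the lex-maximal argmax
  have hstrictf : ∀ μ : Fin (d + 1) →₀ ℕ, toLex μ₀ < toLex μ →
      ‖f.coeff μ‖₊ * Pw r μ < G r f := by
    intro μ hμ
    refine lt_of_le_of_ne (G_term_le r f μ) fun he => ?_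
    have hin : μ ∈ f.support := by
      rw [mem_support_iff]
      intro hc
      exact hf0 (by rw [← he, hc]; simp)
    exact absurd (hμ₀max μ (Finset.mem_filter.mpr ⟨hin, he⟩)) (not_le.mpr hμ)
  have hstrictg : ∀ μ : Fin (d + 1) →₀ ℕ, toLex μ₁ < toLex μ →
      ‖g.coeff μ‖₊ * Pw r μ < G r g := by
    intro μ hμ
    refine lt_of_le_of_ne (G_term_le r g μ) fun he => ?_
    have hin : μ ∈ g.support := by
      rw [mem_support_iff]
      intro hc
      exact hg0 (by rw [← he, hc]; simp)
    exact absurd (hμ₁max μ (Finset.mem_filter.mpr ⟨hin, he⟩)) (not_le.mpr hμ)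
  set ν₀ := μ₀ + μ₁ with hν₀
  have hPν₀ : Pw r ν₀ = Pw r μ₀ * Pw r μ₁ := Pw_add r μ₀ μ₁
  have hPν₀pos : 0 < Pw r ν₀ := by
    rw [hPν₀]
    have h1 : Pw r μ₀ ≠ 0 := fun h => hf0 (by rw [← hval₀, h, mul_zero])
    have h2 : Pw r μ₁ ≠ 0 := fun h => hg0 (by rw [← hval₁, h, mul_zero])
    exact mul_pos (pos_iff_ne_zero.mpr h1) (pos_iff_ne_zero.mpr h2)
  -- each non-main term on the antidiagonal is strictly smaller
  have hrest : ∀ p ∈ (Finset.HasAntidiagonal.antidiagonal ν₀).erase (μ₀, μ₁),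
      ‖f.coeff p.1 * g.coeff p.2‖₊ * Pw r ν₀ < G r f * G r g := by
    intro p hp
    obtain ⟨hpne, hpmem⟩ := Finset.mem_erase.mp hp
    have hsum : p.1 + p.2 = μ₀ + μ₁ := Finset.HasAntidiagonal.mem_antidiagonal.mp hpmem
    have hp1 : p.1 ≠ μ₀ := by
      intro h
      apply hpne
      have : p.2 = μ₁ := by
        apply add_left_cancel (a := μ₀)
        rw [← h, hsum, h]
      exact Prod.ext h this
    have hP : Pw r ν₀ = Pw r p.1 * Pw r p.2 := by rw [hν₀, ← hsum, Pw_add]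
    rw [nnnorm_mul, hP, mul_mul_mul_comm]
    rcases lt_or_gt_of_ne (fun h : toLex p.1 = toLex μ₀ => hp1 (toLex.injective h)) with h | h
    · -- p.1 < μ₀ in lex, so μ₁ < p.2 in lex
      have hlex2 : toLex μ₁ < toLex p.2 := by
        have h1 : toLex p.1 + toLex p.2 < toLex μ₀ + toLex p.2 := add_lt_add_left h _
        have h2 : toLex μ₀ + toLex μ₁ < toLex μ₀ + toLex p.2 := by
          calc toLex μ₀ + toLex μ₁ = toLex p.1 + toLex p.2 := by
                exact congrArg toLex hsum.symm
            _ < toLex μ₀ + toLex p.2 := h1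
        exact lt_of_add_lt_add_left h2
      calc ‖f.coeff p.1‖₊ * Pw r p.1 * (‖g.coeff p.2‖₊ * Pw r p.2)
          ≤ G r f * (‖g.coeff p.2‖₊ * Pw r p.2) := mul_le_mul_left (G_term_le r f p.1) _
        _ < G r f * G r g := mul_lt_mul_of_pos_left (hstrictg p.2 hlex2) (pos_iff_ne_zero.mpr hf0)
    · calc ‖f.coeff p.1‖₊ * Pw r p.1 * (‖g.coeff p.2‖₊ * Pw r p.2)
          ≤ ‖f.coeff p.1‖₊ * Pw r p.1 * G r g := mul_le_mul_right (G_term_le r g p.2) _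
        _ < G r f * G r g := mul_lt_mul_of_pos_right (hstrictf p.1 h) (pos_iff_ne_zero.mpr hg0)
  -- the main term
  have hmain : ‖f.coeff μ₀ * g.coeff μ₁‖₊ * Pw r ν₀ = G r f * G r g := by
    rw [nnnorm_mul, hPν₀, mul_mul_mul_comm, hval₀, hval₁]
  have hmemad : (μ₀, μ₁) ∈ Finset.HasAntidiagonal.antidiagonal ν₀ := Finset.HasAntidiagonal.mem_antidiagonal.mpr rfl
  have hsplit : (f * g).coeff ν₀ =
      f.coeff μ₀ * g.coeff μ₁ +
        ∑ p ∈ (Finset.HasAntidiagonal.antidiagonal ν₀).erase (μ₀, μ₁), f.coeff p.1 * g.coeff p.2 := by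
    rw [show (f * g).coeff ν₀ = MvPolynomial.coeff ν₀ (f * g) from rfl, coeff_mul,
      ← Finset.add_sum_erase _ _ hmemad]
  -- the rest is strictly smaller in norm
  have hrestlt : ‖∑ p ∈ (Finset.HasAntidiagonal.antidiagonal ν₀).erase (μ₀, μ₁),
      f.coeff p.1 * g.coeff p.2‖₊ < ‖f.coeff μ₀ * g.coeff μ₁‖₊ := by
    have hlt : ‖∑ p ∈ (Finset.HasAntidiagonal.antidiagonal ν₀).erase (μ₀, μ₁),
        f.coeff p.1 * g.coeff p.2‖₊ * Pw r ν₀ < G r f * G r g := by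
      rcases Finset.eq_empty_or_nonempty ((Finset.HasAntidiagonal.antidiagonal ν₀).erase (μ₀, μ₁)) with he | hne
      · rw [he]
        simpa using pos_iff_ne_zero.mpr h0
      · obtain ⟨q, hq, hqs⟩ := Finset.exists_mem_eq_sup _ hne
          (fun p => ‖f.coeff p.1 * g.coeff p.2‖₊)
        refine lt_of_le_of_lt (mul_le_mul_left
          ((gauss_na_sum hna _ _).trans_eq hqs) _) (hrest q hq)
    rw [← hmain] at hlt
    exact lt_of_mul_lt_mul_right hlt zero_le
  have hcoeffν₀ : ‖(f * g).coeff ν₀‖₊ = ‖f.coeff μ₀ * g.coeff μ₁‖₊ := by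
    rw [hsplit]
    exact gauss_na_add_eq hna hrestlt
  calc G r f * G r g = ‖(f * g).coeff ν₀‖₊ * Pw r ν₀ := by rw [hcoeffν₀, hmain]
    _ ≤ G r (f * g) := G_term_le r (f * g) ν₀

lemma G_isMultSeminorm (hna : ∀ a b : k, ‖a + b‖ ≤ max ‖a‖ ‖b‖) :
    IsMultSeminorm (G r (k := k) (d := d)) :=
  ⟨G_mul r hna, G_add_le r hna, G_C r⟩

lemma G_restrictsToDiag : RestrictsToDiag (G r (k := k) (d := d)) r :=
  G_restricts r

/-- Part 1: any multiplicative seminorm restricting to the diagonal seminorm is dominated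
by the Gauss seminorm. -/
lemma z_le_G (hna : ∀ a b : k, ‖a + b‖ ≤ max ‖a‖ ‖b‖)
    (z : MvPolynomial (Fin (d + 1)) k → NNReal)
    (hz : IsMultSeminorm z) (hr : RestrictsToDiag z r)
    (f : MvPolynomial (Fin (d + 1)) k) : z f ≤ G r f := by
  obtain ⟨hmul, hadd, hC⟩ := hz
  have hz0 : z 0 = 0 := by simpa using hC 0
  have hz1 : z 1 = 1 := by simpa using hC 1
  have hzX : ∀ i, z (X i) = r i := by
    intro i
    have := hr (fun j => if j = i then 1 else 0)
    have hL : (∑ j, C (if j = i then (1 : k) else 0) * X j) = (X i : MvPolynomial (Fin (d + 1)) k) := by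
      rw [Finset.sum_eq_single i]
      · simp
      · intro j _ hj
        simp [hj]
      · simp
    have hR : Finset.univ.sup (fun j => ‖if j = i then (1 : k) else 0‖₊ * r j) = r i := by
      refine le_antisymm (Finset.sup_le fun j _ => ?_) ?_
      · by_cases hj : j = i
        · subst hj; simp
        · simp [hj]
      · have := Finset.le_sup (f := fun j => ‖if j = i then (1 : k) else 0‖₊ * r j)
          (Finset.mem_univ i)
        simpa using this
    rw [hL] at this
    rw [this, hR]
  have hzpow : ∀ (p : MvPolynomial (Fin (d + 1)) k) (n : ℕ), z (p ^ n) = z p ^ n := by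
    intro p n
    induction n with
    | zero => simpa using hz1
    | succ n ih => rw [pow_succ, pow_succ, hmul, ih]
  have hzmono : ∀ (ν : Fin (d + 1) →₀ ℕ) (a : k),
      z (monomial ν a) = ‖a‖₊ * Pw r ν := by
    intro ν a
    rw [monomial_eq, hmul, hC, Finsupp.prod_fintype _ _ (fun i => pow_zero (X i))]
    congr 1
    have : ∀ (s : Finset (Fin (d + 1))), z (∏ i ∈ s, X i ^ ν i) = ∏ i ∈ s, r i ^ ν i := by
      intro s
      induction s using Finset.cons_induction with
      | empty => simpa using hz1
      | cons i s hi ih => rw [Finset.prod_cons, Finset.prod_cons, hmul, ih, hzpow, hzX]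
    exact this Finset.univ
  have hzsum : ∀ (s : Finset (Fin (d + 1) →₀ ℕ)) (φ : (Fin (d + 1) →₀ ℕ) → MvPolynomial (Fin (d + 1)) k),
      z (∑ i ∈ s, φ i) ≤ s.sup (fun i => z (φ i)) := by
    intro s φ
    induction s using Finset.cons_induction with
    | empty => simpa using hz0.le
    | cons i s hi ih =>
      rw [Finset.sum_cons, Finset.sup_cons]
      exact (hadd _ _).trans (max_le_max le_rfl ih)
  conv_lhs => rw [f.as_sum]
  refine (hzsum _ _).trans ?_
  refine Finset.sup_le fun ν hν => ?_
  rw [hzmono]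
  exact G_term_le r f ν

end GaussAux

/-- the Gauss seminorm `j(x)`, defined by
`|∑ a_ν X^ν|(j(x)) = max_ν ‖a_ν‖ ∏ r_i^{ν_i}`, dominates every multiplicative seminorm `z` on
`k[X₀,…,X_d]` restricting to `x` on the degree-one part; consequently `j(x)` is independent of
the diagonalizing basis (being the unique maximal such multiplicative seminorm). -/
theorem gauss_seminorm_maximal
    {k : Type*} [NontriviallyNormedField k]
    (hna : ∀ a b : k, ‖a + b‖ ≤ max ‖a‖ ‖b‖)
    (d : ℕ) (r : Fin (d + 1) → NNReal)
    (jx : MvPolynomial (Fin (d + 1)) k → NNReal)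
    (hjx : ∀ f : MvPolynomial (Fin (d + 1)) k,
      jx f = f.support.sup (fun ν => ‖f.coeff ν‖₊ * ∏ i, r i ^ ν i)) :
    (∀ z : MvPolynomial (Fin (d + 1)) k → NNReal,
      IsMultSeminorm z → RestrictsToDiag z r → ∀ f, z f ≤ jx f) ∧
    (∀ z : MvPolynomial (Fin (d + 1)) k → NNReal,
      IsMultSeminorm z → RestrictsToDiag z r →
      (∀ z' : MvPolynomial (Fin (d + 1)) k → NNReal,
        IsMultSeminorm z' → RestrictsToDiag z' r → ∀ f, z' f ≤ z f) →
      z = jx) := by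
  have hjG : jx = G r := by
    funext f
    rw [hjx f]
    rfl
  constructor
  · intro z hz hr f
    rw [hjG]
    exact z_le_G r hna z hz hr f
  · intro z hz hr hmax
    funext f
    refine le_antisymm ?_ ?_
    · rw [hjG]
      exact z_le_G r hna z hz hr f
    · rw [hjG]
      exact hmax (G r) (G_isMultSeminorm r hna) (G_restrictsToDiag r) f
end

section
/- Let k be a non-Archimedean local field with |k^×| generated by q > 1, V a k-vector space with basis (e₀, …, e_d), and T̃ the corresponding diagonal torus of GL(V). Then every orbit of GL(V)(k) acting on the set of non-zero seminorms on V contains a T̃-diagonalizable seminorm x (one diagonalized by (e₀,…,e_d)) satisfying 0 ≤ |e_d|(x) ≤ ⋯ ≤ |e₁|(x) ≤ |e₀|(x) ≤ q. -/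
open Finset Filter

namespace OrbitDiag

variable {k : Type*} [NontriviallyNormedField k] {N : ℕ}
variable {y : (Fin N → k) → NNReal}

section main

variable (hsmul : ∀ (a : k) (v : Fin N → k), y (a • v) = ‖a‖₊ * y v)
variable (hmax : ∀ v w : Fin N → k, y (v + w) ≤ max (y v) (y w))

include hsmul in
lemma y_zero : y 0 = 0 := by
  simpa using hsmul 0 0

include hsmul in
lemma y_neg (v : Fin N → k) : y (-v) = y v := by
  simpa using hsmul (-1) v

include hsmul hmax in
lemma y_sub_le (u v : Fin N → k) : y (u - v) ≤ max (y u) (y v) := by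
  rw [sub_eq_add_neg]
  simpa [y_neg hsmul] using hmax u (-v)

include hsmul hmax in
lemma y_sub_eq (u v : Fin N → k) (h : y v < y u) : y (u - v) = y u := by
  refine le_antisymm ?_ ?_
  · simpa [max_eq_left h.le] using y_sub_le hsmul hmax u v
  · have h2 := hmax (u - v) v
    rw [sub_add_cancel] at h2
    rcases le_max_iff.mp h2 with h3 | h3
    · exact h3
    · exact absurd h3 (not_le.mpr h)

lemma y_S_sub {m : ℕ} {b : Fin m → (Fin N → k)}
    (hb : ∀ c : Fin m → k, y (∑ i, c i • b i) = univ.sup fun i => ‖c i‖₊ * y (b i))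
    (c c' : Fin m → k) :
    y ((∑ i, c i • b i) - ∑ i, c' i • b i)
      = univ.sup fun i => ‖c i - c' i‖₊ * y (b i) := by
  have e : (∑ i, c i • b i) - ∑ i, c' i • b i = ∑ i, (c i - c' i) • b i := by
    rw [← Finset.sum_sub_distrib]
    simp [sub_smul]
  rw [e]
  simpa using hb fun i => c i - c' i


include hsmul hmax in
lemma exists_min [CompleteSpace k] (q : NNReal) (hq : 1 < q)
    (hgen : ∀ a : k, a ≠ 0 → ∃ m : ℤ, ‖a‖₊ = q ^ m)
    {m : ℕ} (b : Fin m → (Fin N → k))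
    (hb : ∀ c : Fin m → k, y (∑ i, c i • b i) = univ.sup fun i => ‖c i‖₊ * y (b i))
    (u : Fin N → k) :
    ∃ w : Fin m → k, ∀ c : Fin m → k,
      y (u - ∑ i, w i • b i) ≤ y (u - ∑ i, c i • b i) := by
  by_cases hinf : ∀ ε : NNReal, 0 < ε → ∃ c : Fin m → k, y (u - ∑ i, c i • b i) < ε
  · -- completeness case : the distance 0 is attained
    have hhalf : (1 / 2 : NNReal) < 1 := by
      rw [← NNReal.coe_lt_coe]
      norm_num
    have hseq : ∀ n : ℕ, ∃ c : Fin m → k,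
        y (u - ∑ i, c i • b i) < (1 / 2 : NNReal) ^ n := fun n =>
      hinf _ (by positivity)
    choose seq hseqlt using hseq
    have hdiffbound : ∀ n n' : ℕ, n ≤ n' →
        y ((∑ j, seq n j • b j) - ∑ j, seq n' j • b j) ≤ (1 / 2 : NNReal) ^ n := by
      intro n n' hnn
      have e : (∑ j, seq n j • b j) - ∑ j, seq n' j • b j
          = (u - ∑ j, seq n' j • b j) - (u - ∑ j, seq n j • b j) := by abel
      rw [e]
      refine le_trans (y_sub_le hsmul hmax _ _) (max_le (le_trans (hseqlt n').le ?_) (hseqlt n).le)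
      exact pow_le_pow_right_of_le_one' hhalf.le hnn
    -- coordinatewise limits
    have hcoord : ∀ i : Fin m, ∃ li : k, y (b i) ≠ 0 →
        Tendsto (fun n => seq n i) atTop (nhds li) := by
      intro i
      by_cases hti : y (b i) = 0
      · exact ⟨0, fun h => absurd hti h⟩
      · have hcau : CauchySeq fun n => seq n i := by
          apply cauchySeq_of_le_tendsto_0'
            (fun n => (((1 / 2 : NNReal) ^ n / y (b i) : NNReal) : ℝ))
          · intro n n' hnn
            rw [dist_eq_norm]
            have key : ‖seq n i - seq n' i‖₊ * y (b i) ≤ (1 / 2 : NNReal) ^ n := by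
              refine le_trans ?_ (hdiffbound n n' hnn)
              rw [y_S_sub hb]
              exact Finset.le_sup (f := fun j => ‖seq n j - seq n' j‖₊ * y (b j)) (mem_univ i)
            have h2 : ‖seq n i - seq n' i‖₊ ≤ (1 / 2 : NNReal) ^ n / y (b i) := by
              rw [le_div_iff₀ (pos_iff_ne_zero.mpr hti)]
              exact key
            exact_mod_cast h2
          · have htend : Tendsto (fun n : ℕ => ((1 / 2 : NNReal) ^ n / y (b i))) atTop
                (nhds 0) := by
              have h12 := NNReal.tendsto_pow_atTop_nhds_zero_of_lt_one hhalf
              simpa [div_eq_mul_inv] using h12.mul_const (y (b i))⁻¹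
            have := NNReal.tendsto_coe.mpr htend
            simpa using this
        obtain ⟨li, hli⟩ := cauchySeq_tendsto_of_complete hcau
        exact ⟨li, fun _ => hli⟩
    choose l hl using hcoord
    refine ⟨l, fun c => ?_⟩
    suffices hz : y (u - ∑ i, l i • b i) = 0 by simp [hz]
    by_contra hz
    have hzpos : 0 < y (u - ∑ i, l i • b i) := pos_iff_ne_zero.mpr hz
    have h1 : ∀ᶠ n in atTop, (1 / 2 : NNReal) ^ n < y (u - ∑ i, l i • b i) := by
      obtain ⟨n₀, hn₀⟩ := NNReal.exists_pow_lt_of_lt_one hzpos hhalf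
      refine eventually_atTop.mpr ⟨n₀, fun n hn => lt_of_le_of_lt ?_ hn₀⟩
      exact pow_le_pow_right_of_le_one' hhalf.le hn
    have h2 : ∀ᶠ n in atTop,
        y ((∑ j, seq n j • b j) - ∑ j, l j • b j) < y (u - ∑ i, l i • b i) := by
      have hper : ∀ j : Fin m, ∀ᶠ n in atTop,
          ‖seq n j - l j‖₊ * y (b j) < y (u - ∑ i, l i • b i) := by
        intro j
        by_cases htj : y (b j) = 0
        · exact Eventually.of_forall fun n => by simp [htj, hzpos]
        · have h0 : Tendsto (fun n => seq n j - l j) atTop (nhds 0) := by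
            simpa using (hl j htj).sub_const (l j)
          have ht : Tendsto (fun n => ‖seq n j - l j‖₊ * y (b j)) atTop (nhds 0) := by
            simpa using (h0.nnnorm).mul_const (y (b j))
          exact ht.eventually_lt_const hzpos
      have hall : ∀ᶠ n in atTop, ∀ j : Fin m,
          ‖seq n j - l j‖₊ * y (b j) < y (u - ∑ i, l i • b i) := eventually_all.mpr hper
      filter_upwards [hall] with n hn
      rw [y_S_sub hb]
      exact (Finset.sup_lt_iff (by simpa using hzpos)).mpr fun j _ => hn j
    obtain ⟨n, hn1, hn2⟩ := (h1.and h2).exists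
    have e : u - ∑ i, l i • b i
        = (u - ∑ i, seq n i • b i) + ((∑ i, seq n i • b i) - ∑ i, l i • b i) := by abel
    have hcontr := hmax (u - ∑ i, seq n i • b i) ((∑ i, seq n i • b i) - ∑ i, l i • b i)
    rw [← e] at hcontr
    exact absurd (lt_of_le_of_lt hcontr (max_lt (lt_trans (hseqlt n) hn1) hn2)) (lt_irrefl _)
  · -- discreteness case
    push_neg at hinf
    obtain ⟨ε, hε, hlb⟩ := hinf
    by_contra hcon
    push_neg at hcon
    set t₀ := y u with ht₀
    have hval : ∀ c : Fin m → k, ∃ i : Fin m, ∃ mm : ℤ,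
        y (u - ∑ i, c i • b i) = q ^ mm * y (b i) := by
      intro c
      obtain ⟨c', hc'⟩ := hcon c
      have h1 : y ((u - ∑ i, c i • b i) - (u - ∑ i, c' i • b i)) = y (u - ∑ i, c i • b i) :=
        y_sub_eq hsmul hmax _ _ hc'
      have h2 : (u - ∑ i, c i • b i) - (u - ∑ i, c' i • b i)
          = (∑ i, c' i • b i) - ∑ i, c i • b i := by abel
      rw [h2, y_S_sub hb] at h1
      have hpos : (0 : NNReal) < y (u - ∑ i, c i • b i) := lt_of_lt_of_le hε (hlb c)
      rcases (univ : Finset (Fin m)).eq_empty_or_nonempty with he | hne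
      · have hb0 : (univ.sup fun i => ‖c' i - c i‖₊ * y (b i)) = 0 := by
          rw [he]
          simp
        rw [hb0] at h1
        rw [← h1] at hpos
        exact absurd hpos (lt_irrefl _)
      · obtain ⟨i, _, hi⟩ := Finset.exists_mem_eq_sup univ hne
          fun i => ‖c' i - c i‖₊ * y (b i)
        rw [hi] at h1
        have ha : c' i - c i ≠ 0 := by
          intro h0
          rw [h0] at h1
          simp only [nnnorm_zero, zero_mul] at h1
          rw [← h1] at hpos
          exact lt_irrefl _ hpos
        obtain ⟨mm, hmm⟩ := hgen _ ha
        exact ⟨i, mm, by rw [← h1, hmm]⟩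
    have hq0 : q ≠ 0 := (zero_lt_one.trans hq).ne'
    have hqpos : (0 : NNReal) < q := zero_lt_one.trans hq
    -- finiteness of possible values in [ε, t₀]
    have hfin : ∀ i : Fin m, Set.Finite
        {t : NNReal | (∃ mm : ℤ, t = q ^ mm * y (b i)) ∧ ε ≤ t ∧ t ≤ t₀} := by
      intro i
      by_cases hti : y (b i) = 0
      · convert Set.finite_empty
        ext t
        simp only [Set.mem_setOf_eq, Set.mem_empty_iff_false, iff_false, not_and]
        rintro ⟨mm, rfl⟩ h1 _
        rw [hti, mul_zero] at h1
        exact absurd (lt_of_lt_of_le hε h1) (lt_irrefl _)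
      · obtain ⟨M, hM⟩ := pow_unbounded_of_one_lt (t₀ / y (b i)) hq
        obtain ⟨M', hM'⟩ := pow_unbounded_of_one_lt (y (b i) / ε) hq
        apply Set.Finite.subset
          ((Set.finite_Icc (-(M' : ℤ)) (M : ℤ)).image fun mm : ℤ => q ^ mm * y (b i))
        rintro t ⟨⟨mm, rfl⟩, h1, h2⟩
        refine ⟨mm, ⟨?_, ?_⟩, rfl⟩
        · -- -(M') ≤ mm
          have hub : y (b i) < q ^ M' * ε := by
            have h := (div_lt_iff₀ hε).mp hM'
            first
            | exact h
            | · rw [mul_comm] at h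
                exact h
          have hmmpos : (0 : NNReal) < q ^ mm := zpow_pos hqpos mm
          have h3 : q ^ mm * y (b i) < q ^ mm * (q ^ M' * ε) :=
            mul_lt_mul_of_pos_left hub hmmpos
          have h4 : ε < q ^ (mm + (M' : ℤ)) * ε := by
            calc ε ≤ q ^ mm * y (b i) := h1
              _ < q ^ mm * (q ^ M' * ε) := h3
              _ = q ^ (mm + (M' : ℤ)) * ε := by
                  rw [zpow_add₀ hq0, zpow_natCast, mul_assoc]
          have h5 : (1 : NNReal) < q ^ (mm + (M' : ℤ)) := by
            by_contra h7
            push_neg at h7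
            have h8 : q ^ (mm + (M' : ℤ)) * ε ≤ 1 * ε := mul_le_mul_left h7 ε
            rw [one_mul] at h8
            exact absurd (lt_of_lt_of_le h4 h8) (lt_irrefl _)
          have h6 : (0 : ℤ) < mm + (M' : ℤ) := by
            by_contra h7
            push_neg at h7
            have h8 := (zpow_right_strictMono₀ hq).monotone h7
            rw [zpow_zero] at h8
            exact absurd (lt_of_lt_of_le h5 h8) (lt_irrefl _)
          omega
        · -- mm ≤ M
          have hub : t₀ < q ^ M * y (b i) := by
            have h := (div_lt_iff₀ (pos_iff_ne_zero.mpr hti)).mp hM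
            first
            | exact h
            | · rw [mul_comm] at h
                exact h
          have h3 : q ^ mm * y (b i) < q ^ (M : ℤ) * y (b i) := by
            rw [zpow_natCast]
            exact lt_of_le_of_lt h2 hub
          have h4 : q ^ mm < q ^ (M : ℤ) := lt_of_mul_lt_mul_right h3 zero_le
          have h5 := (zpow_right_strictMono₀ hq).lt_iff_lt.mp h4
          omega
    -- the set of achieved values in [ε, t₀]
    set T : Set NNReal :=
      {t | (∃ c : Fin m → k, y (u - ∑ i, c i • b i) = t) ∧ ε ≤ t ∧ t ≤ t₀} with hT
    have hsubT : T ⊆ ⋃ i : Fin m,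
        {t : NNReal | (∃ mm : ℤ, t = q ^ mm * y (b i)) ∧ ε ≤ t ∧ t ≤ t₀} := by
      rintro t ⟨⟨c, rfl⟩, h1, h2⟩
      obtain ⟨i, mm, hi⟩ := hval c
      exact Set.mem_iUnion.mpr ⟨i, ⟨mm, hi⟩, h1, h2⟩
    have hTfin : T.Finite := Set.Finite.subset (Set.finite_iUnion hfin) hsubT
    have hT0 : t₀ ∈ T := by
      refine ⟨⟨0, by simp [ht₀]⟩, ?_, le_refl _⟩
      have := hlb 0
      simpa [ht₀] using this
    obtain ⟨tm, htmT, htmin⟩ := Set.exists_min_image T id hTfin ⟨t₀, hT0⟩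
    obtain ⟨⟨cm, hcm⟩, hcm1, hcm2⟩ := htmT
    obtain ⟨c', hlt⟩ := hcon cm
    rw [hcm] at hlt
    have h1 : ε ≤ y (u - ∑ i, c' i • b i) := hlb c'
    have h2 : y (u - ∑ i, c' i • b i) ≤ t₀ := le_trans hlt.le hcm2
    have hmem : y (u - ∑ i, c' i • b i) ∈ T := ⟨⟨c', rfl⟩, h1, h2⟩
    have h3 := htmin _ hmem
    simp only [id] at h3
    exact absurd (lt_of_le_of_lt h3 hlt) (lt_irrefl _)


include hsmul hmax in
lemma diag_snoc {m : ℕ} (b : Fin m → (Fin N → k))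
    (hb : ∀ c : Fin m → k, y (∑ i, c i • b i) = univ.sup fun i => ‖c i‖₊ * y (b i))
    (u : Fin N → k) (w : Fin m → k)
    (hmin : ∀ c : Fin m → k, y (u - ∑ i, w i • b i) ≤ y (u - ∑ i, c i • b i))
    (c : Fin (m + 1) → k) :
    y (∑ i, c i • (Fin.snoc b (u - ∑ i, w i • b i) : Fin (m + 1) → Fin N → k) i)
      = univ.sup fun i =>
          ‖c i‖₊ * y ((Fin.snoc b (u - ∑ i, w i • b i) : Fin (m + 1) → Fin N → k) i) := by
  set v : Fin N → k := u - ∑ i, w i • b i with hv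
  have hsum : ∑ i, c i • (Fin.snoc b v : Fin (m + 1) → Fin N → k) i
      = (∑ i : Fin m, c i.castSucc • b i) + c (Fin.last m) • v := by
    rw [Fin.sum_univ_castSucc]
    simp
  have hsup : (univ.sup fun i => ‖c i‖₊ * y ((Fin.snoc b v : Fin (m + 1) → Fin N → k) i))
      = (‖c (Fin.last m)‖₊ * y v) ⊔ univ.sup fun i : Fin m => ‖c i.castSucc‖₊ * y (b i) := by
    rw [Fin.univ_castSuccEmb, Finset.sup_cons, Finset.sup_map]
    congr 1
    · simp
    · refine Finset.sup_congr rfl fun x _ => ?_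
      simp [Function.comp_def, Fin.coe_castSuccEmb]
  rw [hsum, hsup]
  rcases eq_or_ne (c (Fin.last m)) 0 with hc | hc
  · rw [hc]
    simp [hb fun i => c i.castSucc]
  · set A : Fin N → k := ∑ i : Fin m, c i.castSucc • b i with hA
    have hAsmul : c (Fin.last m) • ((c (Fin.last m))⁻¹ • A) = A := by
      rw [smul_smul, mul_inv_cancel₀ hc, one_smul]
    have e1 : u - ∑ i, (w i - (c (Fin.last m))⁻¹ * c i.castSucc) • b i
        = v + (c (Fin.last m))⁻¹ • A := by
      simp only [sub_smul, Finset.sum_sub_distrib, hv, hA, Finset.smul_sum, smul_smul]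
      abel
    have h1 : ‖c (Fin.last m)‖₊ * y v ≤ y (c (Fin.last m) • v + A) := by
      have h := hmin fun i => w i - (c (Fin.last m))⁻¹ * c i.castSucc
      rw [e1] at h
      calc ‖c (Fin.last m)‖₊ * y v
          ≤ ‖c (Fin.last m)‖₊ * y (v + (c (Fin.last m))⁻¹ • A) := mul_le_mul_right h _
        _ = y (c (Fin.last m) • (v + (c (Fin.last m))⁻¹ • A)) := (hsmul _ _).symm
        _ = y (c (Fin.last m) • v + A) := by rw [smul_add, hAsmul]
    have h2 : y A ≤ y (c (Fin.last m) • v + A) := by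
      have h3 := y_sub_le hsmul hmax (c (Fin.last m) • v + A) (c (Fin.last m) • v)
      have e2 : (c (Fin.last m) • v + A) - c (Fin.last m) • v = A := by abel
      rw [e2] at h3
      rcases le_max_iff.mp h3 with h4 | h4
      · exact h4
      · exact le_trans h4 (by rw [hsmul]; exact h1)
    have h3 : y (c (Fin.last m) • v + A) ≤ (‖c (Fin.last m)‖₊ * y v) ⊔ y A := by
      have := hmax (c (Fin.last m) • v) A
      rwa [hsmul] at this
    have key : y (c (Fin.last m) • v + A) = (‖c (Fin.last m)‖₊ * y v) ⊔ y A :=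
      le_antisymm h3 (sup_le h1 h2)
    rw [add_comm, key, hb fun i => c i.castSucc]


include hsmul hmax in
lemma exists_diag [CompleteSpace k] (q : NNReal) (hq : 1 < q)
    (hgen : ∀ a : k, a ≠ 0 → ∃ m : ℤ, ‖a‖₊ = q ^ m) :
    ∀ (m : ℕ) (v : Fin m → (Fin N → k)), LinearIndependent k v →
    ∃ b : Fin m → (Fin N → k), LinearIndependent k b ∧
      Submodule.span k (Set.range b) = Submodule.span k (Set.range v) ∧
      ∀ c : Fin m → k, y (∑ i, c i • b i) = univ.sup fun i => ‖c i‖₊ * y (b i) := by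
  intro m
  induction m with
  | zero =>
    intro v hv
    refine ⟨v, hv, rfl, fun c => ?_⟩
    simp [y_zero hsmul]
  | succ m ih =>
    intro v hv
    obtain ⟨hv', hu⟩ := linearIndependent_fin_succ'.mp hv
    obtain ⟨b, hbli, hbspan, hb⟩ := ih (Fin.init v) hv'
    set u : Fin N → k := v (Fin.last m) with hudef
    obtain ⟨w, hw⟩ := exists_min hsmul hmax q hq hgen b hb u
    have hSw : (∑ i, w i • b i) ∈ Submodule.span k (Set.range b) :=
      Submodule.sum_mem _ fun i _ => Submodule.smul_mem _ _ (Submodule.subset_span ⟨i, rfl⟩)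
    refine ⟨Fin.snoc b (u - ∑ i, w i • b i), ?_, ?_, diag_snoc hsmul hmax b hb u w hw⟩
    · rw [linearIndependent_fin_snoc]
      refine ⟨hbli, fun hmem => ?_⟩
      have h1 : u ∈ Submodule.span k (Set.range b) := by
        have h2 := Submodule.add_mem _ hmem hSw
        simpa using h2
      rw [hbspan] at h1
      exact hu h1
    · have hrange : Set.range (Fin.snoc b (u - ∑ i, w i • b i) : Fin (m + 1) → Fin N → k)
          = insert (u - ∑ i, w i • b i) (Set.range b) := by
        ext z
        constructor
        · rintro ⟨i, rfl⟩
          induction i using Fin.lastCases with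
          | last => simp
          | cast j => simp [Fin.snoc_castSucc]
        · rintro (rfl | ⟨j, rfl⟩)
          · exact ⟨Fin.last m, by simp⟩
          · exact ⟨j.castSucc, by simp⟩
      have hrangev : Set.range v = insert u (Set.range (Fin.init v)) := by
        conv_lhs => rw [← Fin.snoc_init_self v]
        ext z
        constructor
        · rintro ⟨i, rfl⟩
          induction i using Fin.lastCases with
          | last => simp [hudef]
          | cast j => simp [Fin.snoc_castSucc]
        · rintro (rfl | ⟨j, rfl⟩)
          · exact ⟨Fin.last m, by simp [hudef]⟩
          · exact ⟨j.castSucc, by simp⟩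
      rw [hrange, hrangev, Submodule.span_insert, Submodule.span_insert, ← hbspan]
      have hmem1 : u - ∑ i, w i • b i ∈
          Submodule.span k {u} ⊔ Submodule.span k (Set.range b) :=
        Submodule.sub_mem _ (Submodule.mem_sup_left (Submodule.subset_span (Set.mem_singleton _)))
          (Submodule.mem_sup_right hSw)
      have hmem2 : u ∈
          Submodule.span k {u - ∑ i, w i • b i} ⊔ Submodule.span k (Set.range b) := by
        have h5 := Submodule.add_mem
          (Submodule.span k {u - ∑ i, w i • b i} ⊔ Submodule.span k (Set.range b))
          (Submodule.mem_sup_left (Submodule.subset_span (Set.mem_singleton _)))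
          (Submodule.mem_sup_right hSw)
        simpa using h5
      apply le_antisymm
      · refine sup_le ?_ le_sup_right
        rw [Submodule.span_le, Set.singleton_subset_iff]
        exact hmem1
      · refine sup_le ?_ le_sup_right
        rw [Submodule.span_le, Set.singleton_subset_iff]
        exact hmem2


end main

end OrbitDiag

/-- over a non-Archimedean local field `k` with value group generated by `q > 1`,
every `GL(V)(k)`-orbit of non-zero seminorms on `V = k^{d+1}` contains a seminorm `x`
diagonalized by the standard basis `(e₀,…,e_d)` with
`0 ≤ |e_d|(x) ≤ ⋯ ≤ |e₁|(x) ≤ |e₀|(x) ≤ q`. -/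
theorem orbit_contains_dominant_diagonal_seminorm
    {k : Type*} [NontriviallyNormedField k] [CompleteSpace k]
    (hna : ∀ a b : k, ‖a + b‖ ≤ max ‖a‖ ‖b‖)
    (q : NNReal) (hq : 1 < q)
    (hgen : ∀ a : k, a ≠ 0 → ∃ m : ℤ, ‖a‖₊ = q ^ m)
    (d : ℕ)
    (y : (Fin (d + 1) → k) → NNReal)
    (hsmul : ∀ (a : k) (v : Fin (d + 1) → k), y (a • v) = ‖a‖₊ * y v)
    (hmax : ∀ v w : Fin (d + 1) → k, y (v + w) ≤ max (y v) (y w))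
    (hy : ∃ v, y v ≠ 0) :
    ∃ g : (Fin (d + 1) → k) ≃ₗ[k] (Fin (d + 1) → k),
      (∀ c : Fin (d + 1) → k,
        y (g c) = Finset.univ.sup (fun i => ‖c i‖₊ * y (g (Pi.single i 1)))) ∧
      (∀ i j : Fin (d + 1), i ≤ j → y (g (Pi.single j 1)) ≤ y (g (Pi.single i 1))) ∧
      y (g (Pi.single 0 1)) ≤ q := by
  classical
  -- the standard basis is linearly independent
  have hstd : LinearIndependent k fun i : Fin (d + 1) => (Pi.single i 1 : Fin (d + 1) → k) := by
    have h := (Pi.basisFun k (Fin (d + 1))).linearIndependent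
    have he : ⇑(Pi.basisFun k (Fin (d + 1))) = fun i : Fin (d + 1) =>
        (Pi.single i 1 : Fin (d + 1) → k) := by
      funext i
      exact Pi.basisFun_apply k (Fin (d + 1)) i
    rwa [he] at h
  obtain ⟨b, hbli, hbspan, hb⟩ :=
    OrbitDiag.exists_diag hsmul hmax q hq hgen (d + 1) _ hstd
  -- turn it into a basis, hence a linear automorphism
  have hcard : Fintype.card (Fin (d + 1)) = Module.finrank k (Fin (d + 1) → k) := by
    simp [Module.finrank_fin_fun]
  let B := basisOfLinearIndependentOfCardEqFinrank hbli hcard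
  have hB : ⇑B = b := coe_basisOfLinearIndependentOfCardEqFinrank hbli hcard
  let g₀ : (Fin (d + 1) → k) ≃ₗ[k] (Fin (d + 1) → k) :=
    (Pi.basisFun k (Fin (d + 1))).equiv B (Equiv.refl _)
  have hg₀single : ∀ i, g₀ (Pi.single i 1) = b i := by
    intro i
    have h1 := (Pi.basisFun k (Fin (d + 1))).equiv_apply (i := i) B (Equiv.refl _)
    rw [Pi.basisFun_apply] at h1
    rw [h1, Equiv.refl_apply, hB]
  have hsum : ∀ c : Fin (d + 1) → k, ∑ i, c i • (Pi.single i 1 : Fin (d + 1) → k) = c := by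
    intro c
    funext j
    rw [Finset.sum_apply]
    simp [Pi.single_apply, mul_ite]
  have hg₀ : ∀ c : Fin (d + 1) → k, g₀ c = ∑ i, c i • b i := by
    intro c
    conv_lhs => rw [← hsum c]
    rw [map_sum]
    simp_rw [map_smul]
    simp [hg₀single]
  -- scaling factors
  obtain ⟨α, hα⟩ := NormedField.exists_one_lt_norm k
  have hα1 : (1 : NNReal) < ‖α‖₊ := by
    rw [← NNReal.coe_lt_coe]
    simpa using hα
  have hαne : α ≠ 0 := by
    intro h0
    rw [h0] at hα
    simp at hα
    linarith
  have hq0 : q ≠ 0 := (zero_lt_one.trans hq).ne'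
  have hsc : ∀ j : Fin (d + 1), ∃ a : k, a ≠ 0 ∧ ‖a‖₊ * y (b j) ≤ q := by
    intro j
    obtain ⟨n, hn⟩ := pow_unbounded_of_one_lt (y (b j) / q) hα1
    refine ⟨(α⁻¹) ^ n, pow_ne_zero _ (inv_ne_zero hαne), ?_⟩
    have hnrm : ‖(α⁻¹) ^ n‖₊ = (‖α‖₊ ^ n)⁻¹ := by
      rw [nnnorm_pow, nnnorm_inv, inv_pow]
    rw [hnrm]
    have hpowne : ‖α‖₊ ^ n ≠ 0 := pow_ne_zero _ (by positivity)
    have h1 : y (b j) < ‖α‖₊ ^ n * q := by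
      have h := (div_lt_iff₀ (pos_iff_ne_zero.mpr hq0)).mp hn
      first
      | exact h
      | · rw [mul_comm] at h
          exact h
    rw [inv_mul_le_iff₀ (pos_iff_ne_zero.mpr hpowne)]
    exact h1.le
  choose a ha0 haq using hsc
  -- sorting permutation
  set s : Fin (d + 1) → NNReal := fun j => ‖a j‖₊ * y (b j) with hs
  let σ : Equiv.Perm (Fin (d + 1)) := Fin.revPerm.trans (Tuple.sort s)
  have hσ : ∀ i, σ i = Tuple.sort s (Fin.rev i) := fun i => rfl
  -- the diagonal-rescaling-and-permuting linear automorphism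
  let P : (Fin (d + 1) → k) ≃ₗ[k] (Fin (d + 1) → k) :=
    { toFun := fun c j => a j * c (σ.symm j)
      map_add' := by
        intro c₁ c₂
        funext j
        simp [mul_add]
      map_smul' := by
        intro r c
        funext j
        simp only [Pi.smul_apply, smul_eq_mul, RingHom.id_apply]
        ring
      invFun := fun c i => (a (σ i))⁻¹ * c (σ i)
      left_inv := by
        intro c
        funext i
        simp [Equiv.symm_apply_apply, inv_mul_cancel_left₀ (ha0 _)]
      right_inv := by
        intro c
        funext j
        simp [Equiv.apply_symm_apply, mul_inv_cancel_left₀ (ha0 _)] }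
  let G : (Fin (d + 1) → k) ≃ₗ[k] (Fin (d + 1) → k) := P.trans g₀
  have hPapply : ∀ (c : Fin (d + 1) → k) (j : Fin (d + 1)), P c j = a j * c (σ.symm j) :=
    fun c j => rfl
  have hPsingle : ∀ i, P (Pi.single i 1) = a (σ i) • (Pi.single (σ i) 1 : Fin (d + 1) → k) := by
    intro i
    funext j
    rw [hPapply]
    rcases eq_or_ne j (σ i) with rfl | hji
    · simp [Pi.single_apply]
    · have h1 : σ.symm j ≠ i := fun h => hji (by rw [← h, Equiv.apply_symm_apply])
      simp [Pi.single_apply, hji, h1]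
  have hGsingle : ∀ i, y (G (Pi.single i 1)) = s (σ i) := by
    intro i
    show y (g₀ (P (Pi.single i 1))) = s (σ i)
    rw [hPsingle, map_smul, hsmul, hg₀single, hs]
  have hGc : ∀ c : Fin (d + 1) → k,
      y (G c) = univ.sup fun i => ‖c i‖₊ * s (σ i) := by
    intro c
    show y (g₀ (P c)) = _
    rw [hg₀, hb]
    have hterm : ∀ j, ‖P c j‖₊ * y (b j) = ‖c (σ.symm j)‖₊ * s j := by
      intro j
      rw [hPapply, nnnorm_mul, hs]
      ring
    simp_rw [hterm]
    have him : (univ : Finset (Fin (d + 1))).image σ = univ := Finset.image_univ_equiv σ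
    calc (univ.sup fun j => ‖c (σ.symm j)‖₊ * s j)
        = ((univ : Finset (Fin (d + 1))).image σ).sup (fun j => ‖c (σ.symm j)‖₊ * s j) := by
          rw [him]
      _ = univ.sup ((fun j => ‖c (σ.symm j)‖₊ * s j) ∘ σ) := Finset.sup_image _ _ _
      _ = univ.sup fun i => ‖c i‖₊ * s (σ i) := by
          refine Finset.sup_congr rfl fun i _ => ?_
          simp [Function.comp_def, Equiv.symm_apply_apply]
  refine ⟨G, ?_, ?_, ?_⟩
  · intro c
    rw [hGc]
    refine Finset.sup_congr rfl fun i _ => ?_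
    rw [hGsingle]
  · intro i j hij
    rw [hGsingle, hGsingle, hσ, hσ]
    have hrev : Fin.rev j ≤ Fin.rev i := Fin.rev_le_rev.mpr hij
    exact Tuple.monotone_sort s hrev
  · rw [hGsingle]
    exact haq _
end

section
/- Let k be a discretely valued non-Archimedean field with valuation ring k°, V = k^{d+1} with standard basis (e₀,…,e_d), and K(o) = GL(d+1, k°). Let x be a seminorm on V diagonalized by the standard basis. Extend x to each exterior power Λ^m V by |e_I|(x) = ∏_{i∈I} |e_i|(x) and |Σ_I a_I e_I|(x) = max_I |a_I|·|e_I|(x). Then for every g ∈ K(o) such that g·x is also diagonalized by the standard basis, and for every m ∈ {1,…,d+1}: max_{|I|=m} |e_I|(g·x) = max_{|I|=m} |e_I|(x). -/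
open Finset

lemma aux_norm_term {k : Type*} [NontriviallyNormedField k] {n : ℕ}
    (M : Matrix (Fin n) (Fin n) k) (σ : Equiv.Perm (Fin n)) :
    ‖Equiv.Perm.sign σ • ∏ i, M (σ i) i‖ = ∏ i, ‖M (σ i) i‖ := by
  rcases Int.units_eq_one_or (Equiv.Perm.sign σ) with h | h <;>
    simp [h, Units.smul_def, norm_prod]

lemma aux_det_norm_le_one {k : Type*} [NontriviallyNormedField k] [IsUltrametricDist k] {n : ℕ}
    (M : Matrix (Fin n) (Fin n) k) (h : ∀ i j, ‖M i j‖ ≤ 1) : ‖M.det‖ ≤ 1 := by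
  rw [Matrix.det_apply]
  apply IsUltrametricDist.norm_sum_le_of_forall_le_of_nonneg zero_le_one
  intro σ _
  rw [aux_norm_term]
  exact Finset.prod_le_one (fun i _ => norm_nonneg _) (fun i _ => h _ _)

lemma aux_exists_perm {k : Type*} [NontriviallyNormedField k] [IsUltrametricDist k] {n : ℕ}
    (M : Matrix (Fin n) (Fin n) k) (h : ∀ i j, ‖M i j‖ ≤ 1) (hdet : 1 ≤ ‖M.det‖) :
    ∃ σ : Equiv.Perm (Fin n), ∀ i, ‖M (σ i) i‖ = 1 := by
  rw [Matrix.det_apply] at hdet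
  obtain ⟨σ, -, hσ⟩ := IsUltrametricDist.exists_norm_finset_sum_le_of_nonempty
    (Finset.univ_nonempty (α := Equiv.Perm (Fin n)))
    (fun σ : Equiv.Perm (Fin n) => Equiv.Perm.sign σ • ∏ i, M (σ i) i)
  rw [aux_norm_term] at hσ
  have h1 : (1 : ℝ) ≤ ∏ i, ‖M (σ i) i‖ := le_trans hdet hσ
  refine ⟨σ, fun i => le_antisymm (h _ _) ?_⟩
  calc (1:ℝ) ≤ ∏ j, ‖M (σ j) j‖ := h1
    _ ≤ ‖M (σ i) i‖ := by
        rw [← Finset.mul_prod_erase Finset.univ _ (Finset.mem_univ i)]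
        apply mul_le_of_le_one_right (norm_nonneg _)
        exact Finset.prod_le_one (fun j _ => norm_nonneg _) (fun j _ => h _ _)

lemma aux_sup_prod_le {n m : ℕ} (f g : Fin n → NNReal) (ρ : Equiv.Perm (Fin n))
    (h : ∀ i, f i ≤ g (ρ i)) :
    (Finset.powersetCard m (Finset.univ : Finset (Fin n))).sup (fun I => ∏ i ∈ I, f i) ≤
      (Finset.powersetCard m (Finset.univ : Finset (Fin n))).sup (fun I => ∏ i ∈ I, g i) := by
  apply Finset.sup_le
  intro I hI
  have h1 : I.image ρ ∈ Finset.powersetCard m (Finset.univ : Finset (Fin n)) := by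
    rw [Finset.mem_powersetCard] at hI ⊢
    exact ⟨Finset.subset_univ _, by
      rw [Finset.card_image_of_injective _ ρ.injective]; exact hI.2⟩
  refine le_trans ?_ (Finset.le_sup h1)
  rw [Finset.prod_image (fun a _ b _ hab => ρ.injective hab)]
  exact Finset.prod_le_prod' (fun i _ => h i)

/-- let `x` be a seminorm on `V = k^{d+1}` diagonalized by the standard basis and
`g ∈ K(o) = GL(d+1, k°)` such that `g·x` is also diagonalized by the standard basis. Extending
seminorms to the exterior powers by `|e_I| = ∏_{i∈I} |e_i|`, for every `m ∈ {1,…,d+1}` one has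
`max_{|I|=m} |e_I|(g·x) = max_{|I|=m} |e_I|(x)`. -/
theorem exterior_power_sup_invariant
    {k : Type*} [NontriviallyNormedField k]
    (hna : ∀ a b : k, ‖a + b‖ ≤ max ‖a‖ ‖b‖)
    (hdisc : ∃ q : ℝ, 1 < q ∧ ∀ a : k, a ≠ 0 → ∃ m : ℤ, ‖a‖ = q ^ m)
    (d : ℕ)
    (x : (Fin (d + 1) → k) → NNReal)
    (hsmul : ∀ (a : k) (v : Fin (d + 1) → k), x (a • v) = ‖a‖₊ * x v)
    (hmax : ∀ v w : Fin (d + 1) → k, x (v + w) ≤ max (x v) (x w))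
    (hdiag : ∀ c : Fin (d + 1) → k,
      x c = Finset.univ.sup (fun i => ‖c i‖₊ * x (Pi.single i 1)))
    (g : Matrix.GeneralLinearGroup (Fin (d + 1)) k)
    (hg : ∀ i j, ‖(↑g : Matrix (Fin (d + 1)) (Fin (d + 1)) k) i j‖ ≤ 1)
    (hginv : ∀ i j, ‖(↑g⁻¹ : Matrix (Fin (d + 1)) (Fin (d + 1)) k) i j‖ ≤ 1)
    (y : (Fin (d + 1) → k) → NNReal)
    (hy : ∀ v, y v = x ((↑g⁻¹ : Matrix (Fin (d + 1)) (Fin (d + 1)) k).mulVec v))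
    (hydiag : ∀ c : Fin (d + 1) → k,
      y c = Finset.univ.sup (fun i => ‖c i‖₊ * y (Pi.single i 1))) :
    ∀ m : ℕ, 1 ≤ m → m ≤ d + 1 →
      (Finset.powersetCard m (Finset.univ : Finset (Fin (d + 1)))).sup
          (fun I => ∏ i ∈ I, y (Pi.single i 1)) =
        (Finset.powersetCard m (Finset.univ : Finset (Fin (d + 1)))).sup
          (fun I => ∏ i ∈ I, x (Pi.single i 1)) := by
  haveI : IsUltrametricDist k :=
    IsUltrametricDist.isUltrametricDist_of_forall_norm_add_le_max_norm hna
  set A : Matrix (Fin (d + 1)) (Fin (d + 1)) k := ↑g with hA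
  set B : Matrix (Fin (d + 1)) (Fin (d + 1)) k := ↑g⁻¹ with hB
  have hAB : A * B = 1 := Units.mul_inv g
  have hBA : B * A = 1 := Units.inv_mul g
  set a : Fin (d + 1) → NNReal := fun j => x (Pi.single j 1) with ha
  set b : Fin (d + 1) → NNReal := fun i => y (Pi.single i 1) with hb
  -- determinant norms
  have hdetmul : ‖A.det‖ * ‖B.det‖ = 1 := by
    rw [← norm_mul, ← Matrix.det_mul, hAB, Matrix.det_one, norm_one]
  have hdetA : (1 : ℝ) ≤ ‖A.det‖ := by
    nlinarith [aux_det_norm_le_one B hginv, norm_nonneg A.det, norm_nonneg B.det]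
  have hdetB : (1 : ℝ) ≤ ‖B.det‖ := by
    nlinarith [aux_det_norm_le_one A hg, norm_nonneg A.det, norm_nonneg B.det]
  obtain ⟨σ, hσ⟩ := aux_exists_perm B hginv hdetB
  obtain ⟨τ, hτ⟩ := aux_exists_perm A hg hdetA
  -- key inequalities
  have key1 : ∀ i j, ‖B j i‖₊ * a j ≤ b i := by
    intro i j
    have hbi : b i = Finset.univ.sup (fun j => ‖B j i‖₊ * a j) := by
      show y (Pi.single i 1) = _
      rw [hy, hdiag]
      apply Finset.sup_congr rfl
      intro j _
      simp [Matrix.mulVec_single]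
      exact Or.inl rfl
    rw [hbi]
    exact Finset.le_sup (f := fun j => ‖B j i‖₊ * a j) (Finset.mem_univ j)
  have key2 : ∀ i j, ‖A i j‖₊ * b i ≤ a j := by
    intro i j
    have hxy : a j = y (A.mulVec (Pi.single j 1)) := by
      show x (Pi.single j 1) = _
      rw [hy, Matrix.mulVec_mulVec, hBA, Matrix.one_mulVec]
    have haj : a j = Finset.univ.sup (fun i => ‖A i j‖₊ * b i) := by
      rw [hxy, hydiag]
      apply Finset.sup_congr rfl
      intro i _
      simp [Matrix.mulVec_single]
      exact Or.inl rfl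
    rw [haj]
    exact Finset.le_sup (f := fun i => ‖A i j‖₊ * b i) (Finset.mem_univ i)
  have hσ' : ∀ i, a (σ i) ≤ b i := by
    intro i
    have h1 : ‖B (σ i) i‖₊ = 1 := by
      rw [← NNReal.coe_inj]
      simpa using hσ i
    have := key1 i (σ i)
    rwa [h1, one_mul] at this
  have hτ' : ∀ j, b (τ j) ≤ a j := by
    intro j
    have h1 : ‖A (τ j) j‖₊ = 1 := by
      rw [← NNReal.coe_inj]
      simpa using hτ j
    have := key2 (τ j) j
    rwa [h1, one_mul] at this
  intro m _ _
  apply le_antisymm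
  · exact aux_sup_prod_le b a τ.symm (fun i => by simpa using hτ' (τ.symm i))
  · exact aux_sup_prod_le a b σ.symm (fun j => by simpa using hσ' (σ.symm j))
end

section
/- In the setting of the previous statement, the set C̄ of non-zero seminorms x on V = k^{d+1} diagonalized by the standard basis and satisfying 0 ≤ |e_d|(x) ≤ ⋯ ≤ |e₁|(x) ≤ |e₀|(x) is a fundamental domain for the action of K(o) = GL(d+1, k°) on non-zero seminorms: every K(o)-orbit meets C̄, and if x ∈ C̄, g ∈ K(o), and g·x ∈ C̄, then g·x = x. -/
/-- A (non-Archimedean) seminorm on `V = k^{d+1}`. -/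
def IsVecSeminorm {k : Type*} [NormedField k] (d : ℕ)
    (x : (Fin (d + 1) → k) → NNReal) : Prop :=
  (∀ (a : k) (v : Fin (d + 1) → k), x (a • v) = ‖a‖₊ * x v) ∧
  (∀ v w : Fin (d + 1) → k, x (v + w) ≤ max (x v) (x w))

/-- `x` belongs to the set `C̄`: it is a non-zero seminorm diagonalized by the standard basis
with `0 ≤ |e_d|(x) ≤ ⋯ ≤ |e₁|(x) ≤ |e₀|(x)`. -/
def InCbar {k : Type*} [NormedField k] (d : ℕ)
    (x : (Fin (d + 1) → k) → NNReal) : Prop :=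
  (∃ v, x v ≠ 0) ∧
  (∀ c : Fin (d + 1) → k,
    x c = Finset.univ.sup (fun i => ‖c i‖₊ * x (Pi.single i 1))) ∧
  (∀ i j : Fin (d + 1), i ≤ j → x (Pi.single j 1) ≤ x (Pi.single i 1))

/-- `g` belongs to `K(o) = GL(d+1, k°)`: both `g` and `g⁻¹` have entries in the valuation
ring `k°`. -/
def InKo {k : Type*} [NormedField k] (d : ℕ)
    (g : Matrix.GeneralLinearGroup (Fin (d + 1)) k) : Prop :=
  (∀ i j, ‖(↑g : Matrix (Fin (d + 1)) (Fin (d + 1)) k) i j‖ ≤ 1) ∧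
  (∀ i j, ‖(↑g⁻¹ : Matrix (Fin (d + 1)) (Fin (d + 1)) k) i j‖ ≤ 1)

/-- The action of `GL(d+1,k)` on seminorms: `(g·x)(v) = x(g⁻¹ v)`. -/
def glAct {k : Type*} [NormedField k] (d : ℕ)
    (g : Matrix.GeneralLinearGroup (Fin (d + 1)) k)
    (x : (Fin (d + 1) → k) → NNReal) : (Fin (d + 1) → k) → NNReal :=
  fun v => x ((↑g⁻¹ : Matrix (Fin (d + 1)) (Fin (d + 1)) k).mulVec v)


open Finset Filter
namespace CbarAux
set_option linter.unusedSectionVars false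
set_option maxHeartbeats 1000000
variable {k : Type*} [NontriviallyNormedField k]

def SN (n : ℕ) (x : (Fin n → k) → NNReal) : Prop :=
  (∀ (a : k) (v : Fin n → k), x (a • v) = ‖a‖₊ * x v) ∧
  (∀ v w : Fin n → k, x (v + w) ≤ max (x v) (x w))

theorem SN.zero {n : ℕ} {x : (Fin n → k) → NNReal} (hx : SN n x) : x 0 = 0 := by
  have := hx.1 0 0; simpa using this

theorem SN.neg' {m : ℕ} {y : (Fin m → k) → NNReal} (hx : SN m y) (v) : y (-v) = y v := by
  have := hx.1 (-1) v; simpa using this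

theorem SN.add_eq_left' {m : ℕ} {x : (Fin m → k) → NNReal} (hx : SN m x) {v w : Fin m → k}
    (h : x w < x v) : x (v + w) = x v := by
  refine le_antisymm ((hx.2 v w).trans (by simp [h.le])) ?_
  have h2 : x v ≤ max (x (v + w)) (x w) := by
    have h3 := hx.2 (v + w) (-w)
    rw [hx.neg'] at h3
    simpa using h3
  rcases max_cases (x (v+w)) (x w) with ⟨he, _⟩ | ⟨he, _⟩
  · rw [he] at h2; exact h2
  · rw [he] at h2; exact absurd (h2.trans_lt h) (lt_irrefl _)

theorem SN.sum_le {n : ℕ} {x : (Fin n → k) → NNReal} {ι : Type*} (hx : SN n x)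
    (s : Finset ι) (f : ι → Fin n → k) :
    x (∑ i ∈ s, f i) ≤ s.sup (fun i => x (f i)) := by
  classical
  induction s using Finset.induction_on with
  | empty => simp [hx.zero]
  | insert _ _ hi ih =>
    rename_i a s
    rw [Finset.sum_insert hi, Finset.sup_insert]
    exact (hx.2 _ _).trans (max_le_max le_rfl ih)

theorem SN.combo_le {n : ℕ} {x : (Fin n → k) → NNReal} {ι : Type*} (hx : SN n x)
    (s : Finset ι) (c : ι → k) (f : ι → Fin n → k) :
    x (∑ i ∈ s, c i • f i) ≤ s.sup (fun i => ‖c i‖₊ * x (f i)) := by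
  refine (hx.sum_le s _).trans ?_
  exact Finset.sup_mono_fun (fun i _ => by rw [hx.1])

theorem SN.le_single {n : ℕ} {x : (Fin n → k) → NNReal} (hx : SN n x) (v : Fin n → k) :
    x v ≤ Finset.univ.sup (fun i => ‖v i‖₊ * x (Pi.single i 1)) := by
  have hv : v = ∑ i : Fin n, v i • (Pi.single i 1 : Fin n → k) := by
    funext j
    simp [Pi.single_apply, Finset.sum_apply, mul_comm]
  calc x v = x (∑ i : Fin n, v i • (Pi.single i 1 : Fin n → k)) := by rw [← hv]
    _ ≤ _ := hx.combo_le _ _ _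

theorem norm_sum_le {ι : Type*} (hna : ∀ a b : k, ‖a + b‖ ≤ max ‖a‖ ‖b‖)
    (s : Finset ι) (f : ι → k) {C : ℝ} (hC : 0 ≤ C) (h : ∀ i ∈ s, ‖f i‖ ≤ C) :
    ‖∑ i ∈ s, f i‖ ≤ C := by
  classical
  induction s using Finset.induction_on with
  | empty => simpa using hC
  | insert _ _ hi ih =>
    rename_i a s
    rw [Finset.sum_insert hi]
    exact (hna _ _).trans (max_le (h a (by simp)) (ih fun i hi => h i (by simp [hi])))

/-- split a `sup` over `Fin (n+1)` -/
theorem sup_univ_succ {α : Type*} [SemilatticeSup α] [OrderBot α] {m : ℕ}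
    (f : Fin (m+1) → α) :
    Finset.univ.sup f = max (f 0) (Finset.univ.sup (fun j : Fin m => f j.succ)) := by
  rw [Fin.univ_succ]
  simp [Finset.sup_map, Function.comp_def]

theorem sup_perm {α : Type*} [SemilatticeSup α] [OrderBot α] {m : ℕ}
    (f : Fin m → α) (σ : Equiv.Perm (Fin m)) :
    Finset.univ.sup (fun i => f (σ i)) = Finset.univ.sup f := by
  refine le_antisymm (Finset.sup_le fun i _ => Finset.le_sup (Finset.mem_univ _)) ?_
  refine Finset.sup_le fun i _ => ?_
  have : f i = f (σ (σ.symm i)) := by rw [Equiv.apply_symm_apply]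
  rw [this]
  exact Finset.le_sup (f := fun i => f (σ i)) (Finset.mem_univ (σ.symm i))

theorem tail_single_succ {m : ℕ} (j : Fin m) :
    Fin.tail (Pi.single j.succ (1:k) : Fin (m+1) → k) = Pi.single j 1 := by
  funext i
  simp only [Fin.tail, Pi.single_apply]
  by_cases h : i = j
  · subst h; simp
  · rw [if_neg (fun hc => h (Fin.succ_injective _ hc)), if_neg h]

theorem tail_single_zero {m : ℕ} :
    Fin.tail (Pi.single 0 (1:k) : Fin (m+1) → k) = 0 := by
  funext i
  simp [Fin.tail, Pi.single_apply, Fin.succ_ne_zero]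

theorem single_zero_eq_cons {m : ℕ} :
    (Pi.single 0 (1:k) : Fin (m+1) → k) = Fin.cons 1 0 := by
  funext j
  refine Fin.cases ?_ (fun i => ?_) j
  · simp
  · simp [Pi.single_apply, Fin.succ_ne_zero]

theorem single_comp_perm {m : ℕ} (σ : Equiv.Perm (Fin m)) (i : Fin m) :
    ((Pi.single i (1:k) : Fin m → k) ∘ σ) = Pi.single (σ.symm i) 1 := by
  funext j
  simp only [Function.comp_apply, Pi.single_apply]
  by_cases h : j = σ.symm i
  · subst h; simp
  · rw [if_neg, if_neg h]
    intro hc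
    exact h (by rw [← hc, Equiv.symm_apply_apply])


noncomputable def Q {n : ℕ} (x : (Fin (n+1) → k) → NNReal) : (Fin n → k) → NNReal :=
  fun c => ⨅ t : k, x (Fin.cons t c)

variable {n : ℕ} {x : (Fin (n+1) → k) → NNReal}

theorem Q_le (c : Fin n → k) (t : k) : Q x c ≤ x (Fin.cons t c) :=
  ciInf_le (OrderBot.bddBelow _) t

theorem Q_le' (v : Fin (n+1) → k) : Q x (Fin.tail v) ≤ x v := by
  have h := Q_le (x := x) (Fin.tail v) (v 0)
  rwa [Fin.cons_self_tail] at h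

theorem smul_cons (a t : k) (c : Fin n → k) :
    a • (Fin.cons t c : Fin (n+1) → k) = Fin.cons (a * t) (a • c) := by
  funext j
  refine Fin.cases ?_ (fun i => ?_) j <;> simp

theorem cons_add_cons (t s : k) (c d : Fin n → k) :
    (Fin.cons t c + Fin.cons s d : Fin (n+1) → k) = Fin.cons (t + s) (c + d) := by
  funext j
  refine Fin.cases ?_ (fun i => ?_) j <;> simp

theorem SN.Q (hx : SN (n+1) x) : SN n (CbarAux.Q x) := by
  constructor
  · intro a c
    rcases eq_or_ne a 0 with rfl | ha
    · simp only [zero_smul, nnnorm_zero, zero_mul]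
      refine le_antisymm ?_ zero_le
      have h0 : x (Fin.cons 0 (0 : Fin n → k)) = 0 := by
        have he : (Fin.cons 0 (0 : Fin n → k) : Fin (n+1) → k) = ((0:k) • 0) := by
          funext j; refine Fin.cases ?_ (fun i => ?_) j <;> simp
        rw [he, hx.1]; simp
      exact (Q_le 0 0).trans (le_of_eq h0)
    · refine le_antisymm ?_ ?_
      · show (⨅ t : k, x (Fin.cons t (a • c))) ≤ ‖a‖₊ * CbarAux.Q x c
        rw [show ‖a‖₊ * CbarAux.Q x c = ⨅ t : k, ‖a‖₊ * x (Fin.cons t c) from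
          NNReal.mul_iInf _ _]
        refine le_ciInf fun t => ?_
        refine (ciInf_le (OrderBot.bddBelow _) (a * t)).trans (le_of_eq ?_)
        rw [← hx.1, smul_cons]
      · show ‖a‖₊ * CbarAux.Q x c ≤ ⨅ t : k, x (Fin.cons t (a • c))
        rw [show ‖a‖₊ * CbarAux.Q x c = ⨅ t : k, ‖a‖₊ * x (Fin.cons t c) from
          NNReal.mul_iInf _ _]
        refine le_ciInf fun t => ?_
        have h2 : ‖a‖₊ * x (Fin.cons (a⁻¹ * t) c) = x (Fin.cons t (a • c)) := by
          rw [← hx.1, smul_cons, mul_inv_cancel_left₀ ha]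
        exact (ciInf_le (OrderBot.bddBelow _) (a⁻¹ * t)).trans h2.le
  · intro c d
    by_contra hcon
    push_neg at hcon
    have h1 : CbarAux.Q x c < CbarAux.Q x (c + d) := (le_max_left _ _).trans_lt hcon
    have h2 : CbarAux.Q x d < CbarAux.Q x (c + d) := (le_max_right _ _).trans_lt hcon
    obtain ⟨t, ht⟩ := exists_lt_of_ciInf_lt h1
    obtain ⟨s, hs⟩ := exists_lt_of_ciInf_lt h2
    have h3 : CbarAux.Q x (c + d) ≤ x (Fin.cons (t + s) (c + d)) := Q_le _ _
    rw [← cons_add_cons] at h3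
    exact lt_irrefl _ ((h3.trans (hx.2 _ _)).trans_lt (max_lt ht hs))

/-- the standard basis vector `e₀`. -/
def e0 (n : ℕ) : Fin (n+1) → k := Fin.cons 1 0

theorem cons_eq_add (t s : k) (c : Fin n → k) :
    (Fin.cons t c : Fin (n+1) → k) = Fin.cons s c + (t - s) • e0 n := by
  funext j
  refine Fin.cases ?_ (fun i => ?_) j <;> simp [e0]

theorem x_smul_e0 (hx : SN (n+1) x) (a : k) : x (a • e0 n) = ‖a‖₊ * x (e0 n) :=
  hx.1 a _

theorem xdiff (hx : SN (n+1) x) (c : Fin n → k) (t s : k) :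
    ‖t - s‖₊ * x (e0 n) ≤ max (x (Fin.cons t c)) (x (Fin.cons s c)) := by
  have he : (t - s) • e0 n = (Fin.cons t c : Fin (n+1) → k) + (-(Fin.cons s c)) := by
    rw [cons_eq_add t s c]; abel
  rw [← x_smul_e0 hx, he]
  exact (hx.2 _ _).trans (by rw [hx.neg'])

theorem xval_le (hx : SN (n+1) x) (c : Fin n → k) (t s : k) :
    x (Fin.cons t c) ≤ max (x (Fin.cons s c)) (‖t - s‖₊ * x (e0 n)) := by
  rw [cons_eq_add t s c]
  exact (hx.2 _ _).trans (by rw [x_smul_e0 hx])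

/-- key attainment lemma -/
theorem attain [CompleteSpace k]
    (hdisc : ∃ q : ℝ, 1 < q ∧ ∀ a : k, a ≠ 0 → ∃ m : ℤ, ‖a‖ = q ^ m)
    (hx : SN (n+1) x)
    (hmax : ∀ v : Fin (n+1) → k, (∀ i, ‖v i‖ ≤ 1) → x v ≤ x (e0 n))
    (c : Fin n → k) (hc : ∀ i, ‖c i‖ ≤ 1) :
    ∃ t : k, ‖t‖ ≤ 1 ∧ x (Fin.cons t c) = Q x c := by
  obtain ⟨q, hq1, hqv⟩ := hdisc
  have hq0 : (0:ℝ) ≤ q := le_of_lt (lt_trans one_pos hq1)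
  set q' : NNReal := q.toNNReal with hq'def
  have hq'coe : (q' : ℝ) = q := Real.coe_toNNReal q hq0
  have hq1' : 1 < q' := by
    rw [← NNReal.coe_lt_coe, hq'coe]; exact_mod_cast hq1
  have hq'v : ∀ a : k, a ≠ 0 → ∃ m : ℤ, ‖a‖₊ = q' ^ m := by
    intro a ha
    obtain ⟨m, hm⟩ := hqv a ha
    exact ⟨m, by rw [← NNReal.coe_inj, coe_nnnorm, NNReal.coe_zpow, hq'coe, hm]⟩
  set ρ : NNReal := x (e0 n) with hρdef
  set δ : NNReal := Q x c with hδdef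
  -- reduce to attainment without the bound on t
  suffices hatt : ∃ t : k, x (Fin.cons t c) = δ by
    obtain ⟨t0, ht0⟩ := hatt
    by_cases htle : ‖t0‖ ≤ 1
    · exact ⟨t0, htle, ht0⟩
    push_neg at htle
    have hcons0 : ∀ s : k, ‖s‖ ≤ 1 → (∀ i, ‖(Fin.cons s c : Fin (n+1) → k) i‖ ≤ 1) := by
      intro s hs i
      refine Fin.cases ?_ (fun i' => ?_) i
      · simpa using hs
      · simpa using hc i'
    refine ⟨0, by simp, le_antisymm ?_ (Q_le c 0)⟩
    rcases le_or_gt (‖t0‖₊ * ρ) δ with hle | hlt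
    · calc x (Fin.cons (0:k) c) ≤ max (x (Fin.cons t0 c)) (‖(0:k) - t0‖₊ * ρ) :=
            xval_le hx c 0 t0
        _ ≤ δ := by
            rw [ht0]
            refine max_le le_rfl ?_
            simpa using hle
    · exfalso
      have hρpos : 0 < ρ := by
        by_contra hρ0
        push_neg at hρ0
        have : ρ = 0 := le_antisymm (by simpa using hρ0) zero_le
        rw [this, mul_zero] at hlt
        exact absurd hlt (by simp)
      have hx0 : x (Fin.cons (0:k) c) = ‖(0:k) - t0‖₊ * ρ := by
        have he : (Fin.cons (0:k) c : Fin (n+1) → k)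
            = ((0:k) - t0) • e0 n + Fin.cons t0 c := by
          rw [cons_eq_add (0:k) t0 c]; abel
        rw [he, hx.add_eq_left' (by
          rw [x_smul_e0 hx, ht0]
          simpa using hlt), x_smul_e0 hx]
      have hgt : ρ < x (Fin.cons (0:k) c) := by
        rw [hx0]
        simp only [zero_sub, nnnorm_neg]
        calc ρ = 1 * ρ := (one_mul ρ).symm
          _ < ‖t0‖₊ * ρ := by
              exact mul_lt_mul_of_pos_right (by exact_mod_cast htle) hρpos
      exact absurd (hmax _ (hcons0 0 (by simp))) (not_le.mpr hgt)
  -- now prove attainment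
  by_cases hρ0 : ρ = 0
  · -- x (cons t c) independent of t
    refine ⟨0, le_antisymm ?_ (Q_le c 0)⟩
    refine le_ciInf fun t => ?_
    calc x (Fin.cons (0:k) c) ≤ max (x (Fin.cons t c)) (‖(0:k) - t‖₊ * ρ) := xval_le hx c 0 t
      _ = x (Fin.cons t c) := by rw [hρ0, mul_zero]; simp
  have hρpos : 0 < ρ := pos_iff_ne_zero.mpr hρ0
  by_cases hδ0 : δ = 0
  · -- Cauchy sequence argument
    have hseq : ∀ m : ℕ, ∃ t : k, x (Fin.cons t c) < ρ * (2:NNReal)⁻¹ ^ m := by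
      intro m
      have hpos : 0 < ρ * (2:NNReal)⁻¹ ^ m := by positivity
      have : Q x c < ρ * (2:NNReal)⁻¹ ^ m := by rw [← hδdef, hδ0]; exact hpos
      exact exists_lt_of_ciInf_lt this
    choose t ht using hseq
    have hbd : ∀ m l : ℕ, m ≤ l → ‖t m - t l‖₊ < (2:NNReal)⁻¹ ^ m := by
      intro m l hml
      have h1 : ‖t m - t l‖₊ * ρ ≤ max (x (Fin.cons (t m) c)) (x (Fin.cons (t l) c)) :=
        xdiff hx c (t m) (t l)
      have h2 : max (x (Fin.cons (t m) c)) (x (Fin.cons (t l) c)) < ρ * (2:NNReal)⁻¹ ^ m := by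
        refine max_lt (ht m) ((ht l).trans_le ?_)
        exact mul_le_mul_right (pow_le_pow_of_le_one zero_le (by norm_num) hml) ρ
      have h3 : ‖t m - t l‖₊ * ρ < ρ * (2:NNReal)⁻¹ ^ m := h1.trans_lt h2
      rw [mul_comm ρ _] at h3
      exact lt_of_mul_lt_mul_right h3 (zero_le : (0:NNReal) ≤ ρ)
    have hcauchy : CauchySeq t := by
      refine cauchySeq_of_le_tendsto_0 (fun N => ((2:ℝ)⁻¹) ^ N) ?_ ?_
      · intro a b N ha hb
        rcases le_total a b with hab | hab
        · have := hbd a b hab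
          have h4 : ‖t a - t b‖ < ((2:ℝ)⁻¹) ^ a := by exact_mod_cast this
          calc dist (t a) (t b) = ‖t a - t b‖ := dist_eq_norm _ _
            _ ≤ ((2:ℝ)⁻¹) ^ a := h4.le
            _ ≤ ((2:ℝ)⁻¹) ^ N := by
                exact pow_le_pow_of_le_one (by norm_num) (by norm_num) ha
        · have := hbd b a hab
          have h4 : ‖t b - t a‖ < ((2:ℝ)⁻¹) ^ b := by exact_mod_cast this
          calc dist (t a) (t b) = ‖t b - t a‖ := by rw [dist_comm, dist_eq_norm]
            _ ≤ ((2:ℝ)⁻¹) ^ b := h4.le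
            _ ≤ ((2:ℝ)⁻¹) ^ N := by
                exact pow_le_pow_of_le_one (by norm_num) (by norm_num) hb
      · exact tendsto_pow_atTop_nhds_zero_of_lt_one (by norm_num) (by norm_num)
    obtain ⟨T, hT⟩ := cauchySeq_tendsto_of_complete hcauchy
    refine ⟨T, le_antisymm ?_ (by rw [hδ0]; exact zero_le)⟩
    rw [hδ0]
    have hub : ∀ m, x (Fin.cons T c) ≤
        max (x (Fin.cons (t m) c)) (‖T - t m‖₊ * ρ) := fun m => xval_le hx c T (t m)
    have ht1 : Tendsto (fun m => x (Fin.cons (t m) c)) atTop (nhds 0) := by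
      refine tendsto_of_tendsto_of_tendsto_of_le_of_le tendsto_const_nhds ?_
        (fun m => zero_le) (fun m => (ht m).le)
      have : Tendsto (fun m : ℕ => (2:NNReal)⁻¹ ^ m) atTop (nhds 0) :=
        NNReal.tendsto_pow_atTop_nhds_zero_of_lt_one (by rw [← NNReal.coe_lt_coe]; norm_num)
      simpa using this.const_mul ρ
    have ht2 : Tendsto (fun m => ‖T - t m‖₊ * ρ) atTop (nhds 0) := by
      have hd : Tendsto (fun m => ‖T - t m‖₊) atTop (nhds 0) := by
        rw [← NNReal.tendsto_coe]
        have h5 := (tendsto_iff_dist_tendsto_zero).mp hT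
        simp only [coe_nnnorm, NNReal.coe_zero]
        simpa [dist_eq_norm, norm_sub_rev] using h5
      simpa using hd.mul_const ρ
    have hmaxt : Tendsto (fun m => max (x (Fin.cons (t m) c)) (‖T - t m‖₊ * ρ))
        atTop (nhds 0) := by
      have := ht1.max ht2
      simpa using this
    exact ge_of_tendsto hmaxt (Eventually.of_forall hub)
  · -- discrete descent argument
    have hδpos : 0 < δ := pos_iff_ne_zero.mpr hδ0
    by_contra hno
    push_neg at hno
    have hgt : ∀ t : k, δ < x (Fin.cons t c) := by
      intro t
      exact lt_of_le_of_ne (Q_le c t) (Ne.symm (hno t))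
    have hvalform : ∀ t : k, ∃ m : ℤ, x (Fin.cons t c) = q' ^ m * ρ := by
      intro t
      obtain ⟨t', ht'⟩ := exists_lt_of_ciInf_lt (show Q x c < x (Fin.cons t c) from hgt t)
      have h1 : x (Fin.cons t c) ≤ max (x (Fin.cons t' c)) (‖t - t'‖₊ * ρ) := xval_le hx c t t'
      have h2 : ‖t - t'‖₊ * ρ ≤ x (Fin.cons t c) :=
        (xdiff hx c t t').trans (max_le le_rfl ht'.le)
      have h3 : x (Fin.cons t c) = ‖t - t'‖₊ * ρ := by
        refine le_antisymm ?_ h2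
        rcases max_cases (x (Fin.cons t' c)) (‖t - t'‖₊ * ρ) with ⟨he, _⟩ | ⟨he, _⟩
        · rw [he] at h1; exact absurd (h1.trans_lt ht') (lt_irrefl _)
        · rw [he] at h1; exact h1
      have htt' : t ≠ t' := by
        intro he
        rw [he, sub_self, nnnorm_zero, zero_mul] at h3
        have h6 := hgt t'
        rw [h3] at h6
        exact absurd h6 (by simp)
      obtain ⟨m, hm⟩ := hq'v (t - t') (sub_ne_zero.mpr htt')
      exact ⟨m, by rw [h3, hm]⟩
    -- pick t1 with value < q' * δ
    have hlt1 : Q x c < q' * δ := by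
      rw [← hδdef]
      calc δ = 1 * δ := (one_mul δ).symm
        _ < q' * δ := mul_lt_mul_of_pos_right hq1' hδpos
    obtain ⟨t1, ht1⟩ := exists_lt_of_ciInf_lt hlt1
    obtain ⟨t2, ht2⟩ := exists_lt_of_ciInf_lt
      (show Q x c < x (Fin.cons t1 c) from hgt t1)
    obtain ⟨m1, hm1⟩ := hvalform t1
    obtain ⟨m2, hm2⟩ := hvalform t2
    have hlt21 : q' ^ m2 * ρ < q' ^ m1 * ρ := by rw [← hm1, ← hm2]; exact ht2
    have hm21 : m2 < m1 := by
      have := lt_of_mul_lt_mul_right hlt21 (zero_le : (0:NNReal) ≤ ρ)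
      exact (zpow_lt_zpow_iff_right₀ hq1').mp this
    have hchain : q' * δ < q' * δ := by
      calc q' * δ < q' * (q' ^ m2 * ρ) := by
            refine mul_lt_mul_of_pos_left ?_ (lt_trans one_pos hq1')
            rw [← hm2]; exact hgt t2
        _ = q' ^ (m2 + 1) * ρ := by rw [zpow_add_one₀ (ne_of_gt (lt_trans one_pos hq1'))]; ring
        _ ≤ q' ^ m1 * ρ := by
            refine mul_le_mul_left ?_ ρ
            exact zpow_le_zpow_right₀ (le_of_lt hq1') (by omega)
        _ = x (Fin.cons t1 c) := hm1.symm
        _ < q' * δ := ht1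
    exact absurd hchain (lt_irrefl _)

theorem exists_adapted [CompleteSpace k]
    (hna : ∀ a b : k, ‖a + b‖ ≤ max ‖a‖ ‖b‖)
    (hdisc : ∃ q : ℝ, 1 < q ∧ ∀ a : k, a ≠ 0 → ∃ m : ℤ, ‖a‖ = q ^ m) :
    ∀ (n : ℕ) (x : (Fin n → k) → NNReal), SN n x →
    ∃ B C : Matrix (Fin n) (Fin n) k,
      B * C = 1 ∧ (∀ i j, ‖B i j‖ ≤ 1) ∧ (∀ i j, ‖C i j‖ ≤ 1) ∧
      ∀ c, x (B.mulVec c) =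
        Finset.univ.sup (fun i => ‖c i‖₊ * x (B.mulVec (Pi.single i 1))) := by
  intro n
  induction n with
  | zero =>
    intro x hx
    refine ⟨1, 1, by simp, ?_, ?_, ?_⟩
    · intro i j; exact absurd i.isLt (by omega)
    · intro i j; exact absurd i.isLt (by omega)
    · intro c
      have hc : c = 0 := Subsingleton.elim _ _
      rw [Matrix.one_mulVec, hc, hx.zero]
      simp
  | succ m ih =>
    intro x hx
    -- choose the coordinate with maximal weight and swap it to position 0
    obtain ⟨i0, -, hi0⟩ := Finset.exists_max_image Finset.univ
      (fun i => x (Pi.single i 1)) ⟨0, Finset.mem_univ 0⟩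
    set σ : Equiv.Perm (Fin (m+1)) := Equiv.swap 0 i0 with hσdef
    set x' : (Fin (m+1) → k) → NNReal := fun v => x (v ∘ σ) with hx'def
    have hx' : SN (m+1) x' := by
      constructor
      · intro a v
        have : (a • v) ∘ σ = a • (v ∘ σ) := rfl
        rw [hx'def]; simp only []
        rw [this, hx.1]
      · intro v w
        have : (v + w) ∘ σ = v ∘ σ + w ∘ σ := rfl
        simp only [hx'def, this]
        exact hx.2 _ _
    have hsym : σ.symm = σ := by rw [hσdef]; exact Equiv.symm_swap 0 i0
    have hsingle' : ∀ i, x' (Pi.single i 1) = x (Pi.single (σ i) 1) := by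
      intro i
      show x ((Pi.single i 1 : Fin (m+1) → k) ∘ σ) = _
      rw [single_comp_perm, hsym]
    have hmax' : ∀ v : Fin (m+1) → k, (∀ i, ‖v i‖ ≤ 1) → x' v ≤ x' (e0 m) := by
      intro v hv
      have h1 : x' (e0 m) = x (Pi.single i0 1) := by
        have he : (e0 m : Fin (m+1) → k) = Pi.single 0 1 := single_zero_eq_cons.symm
        rw [he, hsingle' 0]
        have hs0 : σ 0 = i0 := Equiv.swap_apply_left 0 i0
        rw [hs0]
      rw [h1]
      have h2 : x' v = x (v ∘ σ) := rfl
      rw [h2]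
      refine (hx.le_single (v ∘ σ)).trans (Finset.sup_le fun i _ => ?_)
      calc ‖(v ∘ σ) i‖₊ * x (Pi.single i 1) ≤ 1 * x (Pi.single i 1) := by
            refine mul_le_mul_left ?_ _
            exact_mod_cast hv (σ i)
        _ ≤ x (Pi.single i0 1) := by
            rw [one_mul]; exact hi0 i (Finset.mem_univ i)
    -- apply the induction hypothesis to the quotient seminorm
    obtain ⟨Bb, Cb, hBCb, hBb, hCb, hadb⟩ := ih (Q x') hx'.Q
    -- choose integral minimal lifts for the columns
    have hcols : ∀ j : Fin m, ∀ i, ‖(Bb.mulVec (Pi.single j 1)) i‖ ≤ 1 := by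
      intro j i
      rw [Matrix.mulVec_single_one]
      exact hBb i j
    have hatt : ∀ j : Fin m, ∃ t : k, ‖t‖ ≤ 1 ∧
        x' (Fin.cons t (Bb.mulVec (Pi.single j 1))) = Q x' (Bb.mulVec (Pi.single j 1)) :=
      fun j => attain hdisc hx' hmax' _ (hcols j)
    choose t ht1 ht2 using hatt
    -- assemble the block matrices
    set B : Matrix (Fin (m+1)) (Fin (m+1)) k :=
      Fin.cons (Fin.cons 1 t) (fun i' => Fin.cons 0 (Bb i')) with hBdef
    set C : Matrix (Fin (m+1)) (Fin (m+1)) k :=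
      Fin.cons (Fin.cons 1 (fun j => -(Matrix.vecMul t Cb j)))
        (fun i' => Fin.cons 0 (Cb i')) with hCdef
    have hBmulVec : ∀ c : Fin (m+1) → k,
        B.mulVec c = Fin.cons (c 0 + dotProduct t (Fin.tail c))
          (Bb.mulVec (Fin.tail c)) := by
      intro c
      funext i
      refine Fin.cases ?_ (fun i' => ?_) i
      · show dotProduct (B 0) c = _
        rw [hBdef]
        simp only [Fin.cons_zero, Fin.cons_succ, dotProduct, Fin.sum_univ_succ,
          Fin.cons_zero, Fin.cons_succ]
        simp [Fin.tail, dotProduct]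
      · show dotProduct (B i'.succ) c = _
        rw [hBdef]
        simp only [Fin.cons_succ, Fin.cons_zero, dotProduct, Fin.sum_univ_succ]
        simp [Fin.tail, Matrix.mulVec, dotProduct]
    have hcol0 : B.mulVec (Pi.single 0 1) = (Fin.cons 1 0 : Fin (m+1) → k) := by
      rw [hBmulVec, tail_single_zero]
      simp [Matrix.mulVec_zero]
    have hcolsucc : ∀ j : Fin m, B.mulVec (Pi.single j.succ 1)
        = Fin.cons (t j) (Bb.mulVec (Pi.single j 1)) := by
      intro j
      rw [hBmulVec, tail_single_succ]
      rw [Pi.single_apply]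
      rw [if_neg (Fin.succ_ne_zero j).symm, zero_add, dotProduct_single, mul_one]
    -- the product identity
    have hBC : B * C = 1 := by
      ext i j
      rw [Matrix.mul_apply, Fin.sum_univ_succ]
      refine Fin.cases ?_ (fun i' => ?_) i <;> refine Fin.cases ?_ (fun j' => ?_) j
      · simp [hBdef, hCdef, Matrix.one_apply]
      · simp only [hBdef, hCdef, Fin.cons_zero, Fin.cons_succ]
        rw [Matrix.one_apply_ne (Fin.succ_ne_zero j').symm]
        rw [Matrix.vecMul, dotProduct]
        simp [mul_comm]
      · simp [hBdef, hCdef, Matrix.one_apply, Fin.succ_ne_zero]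
      · simp only [hBdef, hCdef, Fin.cons_zero, Fin.cons_succ]
        have : (1 : Matrix (Fin (m+1)) (Fin (m+1)) k) i'.succ j'.succ
            = (1 : Matrix (Fin m) (Fin m) k) i' j' := by
          simp [Matrix.one_apply, Fin.succ_inj]
        rw [this, ← hBCb, Matrix.mul_apply]
        simp
    have hBint : ∀ i j, ‖B i j‖ ≤ 1 := by
      intro i j
      refine Fin.cases ?_ (fun i' => ?_) i <;> refine Fin.cases ?_ (fun j' => ?_) j
      · simp [hBdef]
      · simp only [hBdef, Fin.cons_zero, Fin.cons_succ]; exact ht1 j'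
      · simp [hBdef]
      · simp only [hBdef, Fin.cons_succ]; exact hBb i' j'
    have hCint : ∀ i j, ‖C i j‖ ≤ 1 := by
      intro i j
      refine Fin.cases ?_ (fun i' => ?_) i <;> refine Fin.cases ?_ (fun j' => ?_) j
      · simp [hCdef]
      · simp only [hCdef, Fin.cons_zero, Fin.cons_succ, norm_neg]
        rw [Matrix.vecMul, dotProduct]
        refine norm_sum_le hna _ _ zero_le_one ?_
        intro l _
        rw [norm_mul]
        exact mul_le_one₀ (ht1 l) (norm_nonneg _) (hCb l j')
      · simp [hCdef]
      · simp only [hCdef, Fin.cons_succ]; exact hCb i' j'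
    have hadapt' : ∀ c : Fin (m+1) → k, x' (B.mulVec c) =
        Finset.univ.sup (fun i => ‖c i‖₊ * x' (B.mulVec (Pi.single i 1))) := by
      intro c
      set cb : Fin m → k := Fin.tail c with hcb
      set w : Fin (m+1) → k :=
        Fin.cons (dotProduct t cb) (Bb.mulVec cb) with hwdef
      have hR : Finset.univ.sup (fun j : Fin m =>
          ‖c j.succ‖₊ * x' (B.mulVec (Pi.single j.succ 1)))
          = Q x' (Bb.mulVec cb) := by
        rw [hadb cb]
        refine Finset.sup_congr rfl fun j _ => ?_
        rw [hcolsucc j, ht2 j]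
        rfl
      have hwub : x' w ≤ Finset.univ.sup (fun j : Fin m =>
          ‖c j.succ‖₊ * x' (B.mulVec (Pi.single j.succ 1))) := by
        have hcomb : w = ∑ j : Fin m,
            cb j • (Fin.cons (t j) (Bb.mulVec (Pi.single j 1)) : Fin (m+1) → k) := by
          rw [hwdef]
          funext i
          refine Fin.cases ?_ (fun i' => ?_) i
          · rw [Fin.cons_zero, Finset.sum_apply]
            simp only [Pi.smul_apply, Fin.cons_zero, smul_eq_mul]
            rw [dotProduct]
            exact Finset.sum_congr rfl fun j _ => mul_comm _ _
          · rw [Fin.cons_succ, Finset.sum_apply]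
            simp only [Pi.smul_apply, Fin.cons_succ, smul_eq_mul]
            rw [Matrix.mulVec, dotProduct]
            refine Finset.sum_congr rfl fun j _ => ?_
            rw [Matrix.mulVec_single_one]
            exact mul_comm _ _
        rw [hcomb]
        refine (hx'.combo_le Finset.univ cb _).trans ?_
        refine Finset.sup_mono_fun fun j _ => ?_
        rw [hcolsucc j]
        exact le_rfl
      have hwlb : Q x' (Bb.mulVec cb) ≤ x' w := by
        rw [hwdef]
        exact Q_le _ _
      have hw : x' w = Finset.univ.sup (fun j : Fin m =>
          ‖c j.succ‖₊ * x' (B.mulVec (Pi.single j.succ 1))) :=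
        le_antisymm hwub (hR ▸ hwlb)
      -- main identity
      rw [hBmulVec c]
      have hsplit : (Fin.cons (c 0 + dotProduct t cb)
          (Bb.mulVec cb) : Fin (m+1) → k)
          = c 0 • (Fin.cons 1 0 : Fin (m+1) → k) + w := by
        rw [hwdef]
        funext i
        refine Fin.cases ?_ (fun i' => ?_) i <;> simp
      rw [sup_univ_succ (fun i => ‖c i‖₊ * x' (B.mulVec (Pi.single i 1)))]
      rw [hcol0, ← hw, hsplit]
      have hxe : x' (c 0 • (Fin.cons 1 0 : Fin (m+1) → k)) = ‖c 0‖₊ * x' (Fin.cons 1 0) :=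
        hx'.1 _ _
      rcases le_or_gt (‖c 0‖₊ * x' (Fin.cons 1 0)) (x' w) with hle | hlt
      · rw [max_eq_right hle]
        refine le_antisymm ?_ ?_
        · refine (hx'.2 _ _).trans ?_
          rw [hxe]
          exact max_le hle le_rfl
        · have h1 : Q x' (Fin.tail (c 0 • (Fin.cons 1 0 : Fin (m+1) → k) + w))
              ≤ x' (c 0 • (Fin.cons 1 0 : Fin (m+1) → k) + w) := Q_le' _
          have h2 : Fin.tail (c 0 • (Fin.cons 1 0 : Fin (m+1) → k) + w)
              = Bb.mulVec cb := by
            funext i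
            simp [Fin.tail, hwdef]
          rw [h2] at h1
          calc x' w = Q x' (Bb.mulVec cb) := by rw [hw, hR]
            _ ≤ _ := h1
      · rw [max_eq_left hlt.le, ← hxe]
        exact hx'.add_eq_left' (by rw [hxe]; exact hlt)
    -- transport back through the permutation σ
    refine ⟨B.submatrix ⇑σ ⇑(Equiv.refl (Fin (m+1))), C.submatrix ⇑(Equiv.refl (Fin (m+1))) ⇑σ,
      ?_, ?_, ?_, ?_⟩
    · rw [Matrix.submatrix_mul_equiv B C ⇑σ (Equiv.refl (Fin (m+1))) ⇑σ, hBC]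
      exact Matrix.submatrix_one_equiv σ
    · intro i j; exact hBint _ _
    · intro i j; exact hCint _ _
    · intro c
      have hmv : ∀ v : Fin (m+1) → k,
          (B.submatrix ⇑σ ⇑(Equiv.refl (Fin (m+1)))).mulVec v = (B.mulVec v) ∘ σ := by
        intro v
        rw [Matrix.submatrix_mulVec_equiv B v ⇑σ (Equiv.refl (Fin (m+1)))]
        rfl
      have hx'eq : ∀ v : Fin (m+1) → k, x ((B.mulVec v) ∘ σ) = x' (B.mulVec v) := fun v => rfl
      rw [hmv c, hx'eq, hadapt' c]
      refine Finset.sup_congr rfl fun i _ => ?_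
      rw [hmv (Pi.single i 1), hx'eq]

theorem norm_det_le_one (hna : ∀ a b : k, ‖a + b‖ ≤ max ‖a‖ ‖b‖) {m : ℕ}
    (M : Matrix (Fin m) (Fin m) k) (hM : ∀ i j, ‖M i j‖ ≤ 1) : ‖M.det‖ ≤ 1 := by
  rw [Matrix.det_apply]
  refine norm_sum_le hna _ _ zero_le_one ?_
  intro σ _
  have hsgn : ‖Equiv.Perm.sign σ • ∏ i, M (σ i) i‖ = ‖∏ i, M (σ i) i‖ := by
    rcases Int.units_eq_one_or (Equiv.Perm.sign σ) with h | h <;> rw [h]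
    · rw [one_smul]
    · have : (-1 : ℤˣ) • (∏ i, M (σ i) i) = -(∏ i, M (σ i) i) := by
        rw [Units.smul_def]
        simp
      rw [this, norm_neg]
  rw [hsgn, norm_prod]
  exact Finset.prod_le_one (fun i _ => norm_nonneg _) (fun i _ => hM _ _)

theorem exists_perm_norm_one (hna : ∀ a b : k, ‖a + b‖ ≤ max ‖a‖ ‖b‖) {m : ℕ}
    (M N : Matrix (Fin m) (Fin m) k) (hM : ∀ i j, ‖M i j‖ ≤ 1) (hN : ∀ i j, ‖N i j‖ ≤ 1)
    (hMN : M * N = 1) : ∃ σ : Equiv.Perm (Fin m), ∀ i, ‖M (σ i) i‖ = 1 := by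
  have hdet : ‖M.det‖ = 1 := by
    have h1 : M.det * N.det = 1 := by rw [← Matrix.det_mul, hMN, Matrix.det_one]
    have h2 : ‖M.det‖ * ‖N.det‖ = 1 := by rw [← norm_mul, h1, norm_one]
    refine le_antisymm (norm_det_le_one hna M hM) ?_
    calc (1:ℝ) = ‖M.det‖ * ‖N.det‖ := h2.symm
      _ ≤ ‖M.det‖ * 1 := by
          exact mul_le_mul_of_nonneg_left (norm_det_le_one hna N hN) (norm_nonneg _)
      _ = ‖M.det‖ := mul_one _
  by_contra hcon
  push_neg at hcon
  have hprod : ∀ σ : Equiv.Perm (Fin m), ∏ i, ‖M (σ i) i‖ < 1 := by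
    intro σ
    obtain ⟨i, hi⟩ := hcon σ
    have hilt : ‖M (σ i) i‖ < 1 := lt_of_le_of_ne (hM _ _) hi
    calc ∏ j, ‖M (σ j) j‖
        = ‖M (σ i) i‖ * ∏ j ∈ Finset.univ.erase i, ‖M (σ j) j‖ :=
          (Finset.mul_prod_erase Finset.univ _ (Finset.mem_univ i)).symm
      _ ≤ ‖M (σ i) i‖ * 1 := by
          refine mul_le_mul_of_nonneg_left ?_ (norm_nonneg _)
          exact Finset.prod_le_one (fun j _ => norm_nonneg _) (fun j _ => hM _ _)
      _ < 1 := by rwa [mul_one]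
  have hlt : ‖M.det‖ < 1 := by
    rw [Matrix.det_apply]
    have hne : (Finset.univ : Finset (Equiv.Perm (Fin m))).Nonempty := ⟨1, Finset.mem_univ _⟩
    set Cm : ℝ := Finset.univ.sup' hne (fun σ : Equiv.Perm (Fin m) => ∏ i, ‖M (σ i) i‖)
      with hCm
    have hCm0 : 0 ≤ Cm := by
      refine le_trans (Finset.prod_nonneg (fun i _ => norm_nonneg _))
        (Finset.le_sup' (fun σ : Equiv.Perm (Fin m) => ∏ i, ‖M (σ i) i‖) (Finset.mem_univ 1))
    have hterm : ∀ σ : Equiv.Perm (Fin m),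
        ‖Equiv.Perm.sign σ • ∏ i, M (σ i) i‖ ≤ Cm := by
      intro σ
      have hsgn : ‖Equiv.Perm.sign σ • ∏ i, M (σ i) i‖ = ‖∏ i, M (σ i) i‖ := by
        rcases Int.units_eq_one_or (Equiv.Perm.sign σ) with h | h <;> rw [h]
        · rw [one_smul]
        · have : (-1 : ℤˣ) • (∏ i, M (σ i) i) = -(∏ i, M (σ i) i) := by
            rw [Units.smul_def]; simp
          rw [this, norm_neg]
      rw [hsgn, norm_prod]
      exact Finset.le_sup' (fun σ : Equiv.Perm (Fin m) => ∏ i, ‖M (σ i) i‖) (Finset.mem_univ σ)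
    have h3 : Cm < 1 := by
      rw [hCm]
      rw [Finset.sup'_lt_iff]
      exact fun σ _ => hprod σ
    exact lt_of_le_of_lt (norm_sum_le hna _ _ hCm0 (fun σ _ => hterm σ)) h3
  rw [hdet] at hlt
  exact lt_irrefl _ hlt

theorem perm_dominate {m : ℕ} (u v : Fin m → NNReal)
    (hu : ∀ i j, i ≤ j → u j ≤ u i) (hv : ∀ i j, i ≤ j → v j ≤ v i)
    (σ : Equiv.Perm (Fin m)) (h : ∀ i, v (σ i) ≤ u i) : ∀ i, v i ≤ u i := by
  intro i
  have hex : ∃ j, i ≤ j ∧ σ j ≤ i := by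
    by_contra hc
    push_neg at hc
    have hsub : ∀ j ∈ Finset.Ici i, σ j ∈ Finset.Ioi i := fun j hj =>
      Finset.mem_Ioi.mpr (hc j (Finset.mem_Ici.mp hj))
    have hcard := Finset.card_le_card_of_injOn σ hsub
      (fun a _ b _ hab => σ.injective hab)
    rw [Fin.card_Ici, Fin.card_Ioi] at hcard
    have := i.isLt
    omega
  obtain ⟨j, hij, hji⟩ := hex
  exact (hv _ _ hji).trans ((h j).trans (hu _ _ hij))

end CbarAux


/-- `C̄` is a fundamental domain for the `K(o)`-action on non-zero seminorms on
`V = k^{d+1}`: every `K(o)`-orbit meets `C̄`, and if `x ∈ C̄`, `g ∈ K(o)` and `g·x ∈ C̄`, then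
`g·x = x`. -/
theorem Cbar_fundamental_domain
    {k : Type*} [NontriviallyNormedField k] [CompleteSpace k]
    (hna : ∀ a b : k, ‖a + b‖ ≤ max ‖a‖ ‖b‖)
    (hdisc : ∃ q : ℝ, 1 < q ∧ ∀ a : k, a ≠ 0 → ∃ m : ℤ, ‖a‖ = q ^ m)
    (d : ℕ) :
    (∀ y : (Fin (d + 1) → k) → NNReal, IsVecSeminorm d y → (∃ v, y v ≠ 0) →
      ∃ g : Matrix.GeneralLinearGroup (Fin (d + 1)) k,
        InKo d g ∧ InCbar d (glAct d g y)) ∧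
    (∀ (x : (Fin (d + 1) → k) → NNReal)
        (g : Matrix.GeneralLinearGroup (Fin (d + 1)) k),
      IsVecSeminorm d x → InCbar d x → InKo d g → InCbar d (glAct d g x) →
        glAct d g x = x) := by
  constructor
  · -- existence
    intro y hy hy0
    obtain ⟨B, C, hBC, hBint, hCint, hadapt⟩ :=
      CbarAux.exists_adapted hna hdisc (d+1) y ⟨hy.1, hy.2⟩
    set f : Fin (d+1) → NNReal := fun i => y (B.mulVec (Pi.single i 1)) with hf
    set ρ : Equiv.Perm (Fin (d+1)) := (Fin.revPerm).trans (Tuple.sort f) with hρ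
    have hanti : ∀ i j : Fin (d+1), i ≤ j → f (ρ j) ≤ f (ρ i) := by
      intro i j hij
      have h1 : (j : Fin (d+1)).rev ≤ (i : Fin (d+1)).rev := Fin.rev_le_rev.mpr hij
      have h2 := Tuple.monotone_sort f h1
      exact h2
    set B' : Matrix (Fin (d+1)) (Fin (d+1)) k := B.submatrix id ⇑ρ with hB'
    set C' : Matrix (Fin (d+1)) (Fin (d+1)) k := C.submatrix ⇑ρ id with hC'
    have hB'C' : B' * C' = 1 := by
      rw [hB', hC', Matrix.submatrix_mul_equiv B C id ρ id, hBC, Matrix.submatrix_id_id]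
    have hC'B' : C' * B' = 1 := mul_eq_one_comm.mp hB'C'
    set g : Matrix.GeneralLinearGroup (Fin (d+1)) k := ⟨C', B', hC'B', hB'C'⟩ with hg
    have hginv : (↑g⁻¹ : Matrix (Fin (d+1)) (Fin (d+1)) k) = B' := rfl
    have hgval : (↑g : Matrix (Fin (d+1)) (Fin (d+1)) k) = C' := rfl
    have hact : ∀ v, glAct d g y v = y (B'.mulVec v) := fun v => rfl
    have hmv : ∀ v : Fin (d+1) → k, B'.mulVec v = B.mulVec (v ∘ ρ.symm) := by
      intro v
      rw [hB']
      have : (id : Fin (d+1) → Fin (d+1)) = ⇑(Equiv.refl (Fin (d+1))) := rfl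
      rw [show B.submatrix id ⇑ρ = B.submatrix ⇑(Equiv.refl (Fin (d+1))) ⇑ρ from rfl]
      rw [Matrix.submatrix_mulVec_equiv B v ⇑(Equiv.refl (Fin (d+1))) ρ]
      rfl
    have hcol : ∀ i, B'.mulVec (Pi.single i 1) = B.mulVec (Pi.single (ρ i) 1) := by
      intro i
      rw [hmv]
      have hsing := CbarAux.single_comp_perm (k := k) ρ.symm i
      rw [Equiv.symm_symm] at hsing
      rw [hsing]
    have hadapt' : ∀ c : Fin (d+1) → k, y (B'.mulVec c) =
        Finset.univ.sup (fun i => ‖c i‖₊ * y (B'.mulVec (Pi.single i 1))) := by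
      intro c
      rw [hmv, hadapt]
      have h2 := CbarAux.sup_perm (fun i => ‖(c ∘ ρ.symm) i‖₊ * f i) ρ
      rw [← h2]
      refine Finset.sup_congr rfl fun i _ => ?_
      simp only [Function.comp_apply, Equiv.symm_apply_apply]
      rw [hcol i]
    refine ⟨g, ⟨?_, ?_⟩, ⟨?_, ?_, ?_⟩⟩
    · intro i j
      rw [hgval, hC']
      exact hCint _ _
    · intro i j
      rw [hginv, hB']
      exact hBint _ _
    · obtain ⟨v0, hv0⟩ := hy0
      refine ⟨C'.mulVec v0, ?_⟩
      rw [hact, Matrix.mulVec_mulVec, hB'C', Matrix.one_mulVec]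
      exact hv0
    · intro c
      rw [hact, hadapt' c]
      refine Finset.sup_congr rfl fun i _ => ?_
      rw [hact]
    · intro i j hij
      rw [hact, hact, hcol i, hcol j]
      exact hanti i j hij
  · -- uniqueness
    intro x g hx hC hK hC'
    have hAB : (↑g⁻¹ : Matrix (Fin (d+1)) (Fin (d+1)) k)
        * (↑g : Matrix (Fin (d+1)) (Fin (d+1)) k) = 1 := Units.inv_mul g
    have hBA : (↑g : Matrix (Fin (d+1)) (Fin (d+1)) k)
        * (↑g⁻¹ : Matrix (Fin (d+1)) (Fin (d+1)) k) = 1 := Units.mul_inv g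
    set A : Matrix (Fin (d+1)) (Fin (d+1)) k := ↑g⁻¹ with hA
    set Bm : Matrix (Fin (d+1)) (Fin (d+1)) k := ↑g with hBm
    set r : Fin (d+1) → NNReal := fun i => x (Pi.single i 1) with hr
    set s : Fin (d+1) → NNReal := fun i => glAct d g x (Pi.single i 1) with hs
    have hs_ge : ∀ i j, ‖A j i‖₊ * r j ≤ s i := by
      intro i j
      have h1 : s i = x (A.mulVec (Pi.single i 1)) := rfl
      rw [h1, hC.2.1 (A.mulVec (Pi.single i 1))]
      have h2 : (A.mulVec (Pi.single i 1)) j = A j i := by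
        rw [Matrix.mulVec_single_one]; rfl
      have h3 := Finset.le_sup (f := fun l => ‖(A.mulVec (Pi.single i 1)) l‖₊ * x (Pi.single l 1))
        (Finset.mem_univ j)
      have h4 : (fun l => ‖(A.mulVec (Pi.single i 1)) l‖₊ * x (Pi.single l 1)) j
          = ‖A j i‖₊ * r j := by
        simp only [h2]; rfl
      have h3 := h4.symm.le.trans h3
      exact h3
    have hr_ge : ∀ i j, ‖Bm j i‖₊ * s j ≤ r i := by
      intro i j
      have h1 : r i = glAct d g x (Bm.mulVec (Pi.single i 1)) := by
        show x (Pi.single i 1) = x (A.mulVec (Bm.mulVec (Pi.single i 1)))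
        rw [Matrix.mulVec_mulVec, hAB, Matrix.one_mulVec]
      rw [h1, hC'.2.1 (Bm.mulVec (Pi.single i 1))]
      have h2 : (Bm.mulVec (Pi.single i 1)) j = Bm j i := by
        rw [Matrix.mulVec_single_one]; rfl
      have h3 := Finset.le_sup
        (f := fun l => ‖(Bm.mulVec (Pi.single i 1)) l‖₊ * glAct d g x (Pi.single l 1))
        (Finset.mem_univ j)
      have h4 : (fun l => ‖(Bm.mulVec (Pi.single i 1)) l‖₊ * glAct d g x (Pi.single l 1)) j
          = ‖Bm j i‖₊ * s j := by
        simp only [h2]; rfl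
      have h3 := h4.symm.le.trans h3
      exact h3
    obtain ⟨σ, hσ⟩ := CbarAux.exists_perm_norm_one hna Bm A hK.1 hK.2 hBA
    obtain ⟨τ, hτ⟩ := CbarAux.exists_perm_norm_one hna A Bm hK.2 hK.1 hAB
    have h1 : ∀ i, s (σ i) ≤ r i := by
      intro i
      have h2 := hr_ge i (σ i)
      have h3 : ‖Bm (σ i) i‖₊ = 1 := by
        rw [← NNReal.coe_inj, coe_nnnorm, hσ i, NNReal.coe_one]
      rwa [h3, one_mul] at h2
    have h2 : ∀ i, r (τ i) ≤ s i := by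
      intro i
      have h2' := hs_ge i (τ i)
      have h3 : ‖A (τ i) i‖₊ = 1 := by
        rw [← NNReal.coe_inj, coe_nnnorm, hτ i, NNReal.coe_one]
      rwa [h3, one_mul] at h2'
    have hranti : ∀ i j : Fin (d+1), i ≤ j → r j ≤ r i := fun i j hij => hC.2.2 i j hij
    have hsanti : ∀ i j : Fin (d+1), i ≤ j → s j ≤ s i := fun i j hij => hC'.2.2 i j hij
    have hsr : ∀ i, s i ≤ r i := CbarAux.perm_dominate r s hranti hsanti σ h1
    have hrs : ∀ i, r i ≤ s i := CbarAux.perm_dominate s r hsanti hranti τ h2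
    funext v
    rw [hC'.2.1 v, hC.2.1 v]
    refine Finset.sup_congr rfl fun i _ => ?_
    have heq : glAct d g x (Pi.single i 1) = x (Pi.single i 1) :=
      le_antisymm (hsr i) (hrs i)
    rw [heq]
end

section
/- Let Φ be a root system with basis Δ and highest dominant weight λ₀ of a finite W-stable set of weights Λ_wt (all of the form λ₀ − Σ_{α∈Δ} n_α α with n_α ∈ ℤ≥0). Let Z = {α ∈ Δ : (λ₀|α) = 0} and let C_∅ be the cone {u : ⟨λ₀ − λ, u⟩ ≥ 0 for all λ ∈ Λ_wt} in the dual space. Then C_∅ equals the union of the closed Weyl chambers 𝔠(Δ') = {u : ⟨α,u⟩ ≥ 0 for all α ∈ Δ'} over all bases Δ' = w(Δ) (w ∈ W) such that w(λ₀) = λ₀; equivalently, over all w in the subgroup of W generated by the reflections r_α, α ∈ Z. -/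
open scoped RealInnerProductSpace

section AuxSection14
variable {E : Type*} [NormedAddCommGroup E] [InnerProductSpace ℝ E]


lemma aux_inner_self_ne (α : E) (h : α ≠ 0) : ⟪α, α⟫ ≠ 0 :=
  fun hz => h (inner_self_eq_zero.mp hz)

lemma aux_r_inner (r : E → (E ≃ₗ[ℝ] E))
    (hrfor : ∀ α v, r α v = v - (2 * ⟪v, α⟫ / ⟪α, α⟫) • α) (α u v : E) :
    ⟪r α u, r α v⟫ = ⟪u, v⟫ := by
  by_cases h : (α : E) = 0
  · simp [hrfor, h]
  · have hne := aux_inner_self_ne α h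
    rw [hrfor, hrfor]
    simp only [inner_sub_left, inner_sub_right, real_inner_smul_left, real_inner_smul_right]
    rw [real_inner_comm α u, real_inner_comm α v]
    field_simp
    ring

lemma aux_r_invol (r : E → (E ≃ₗ[ℝ] E))
    (hrfor : ∀ α v, r α v = v - (2 * ⟪v, α⟫ / ⟪α, α⟫) • α) (α v : E) :
    r α (r α v) = v := by
  by_cases h : (α : E) = 0
  · simp [hrfor, h]
  · have hne := aux_inner_self_ne α h
    rw [hrfor, hrfor]
    simp only [inner_sub_left, real_inner_smul_left]
    rw [sub_sub, sub_eq_self, ← add_smul, smul_eq_zero]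
    left
    field_simp
    ring


lemma aux_closure_inner (s : Set (E ≃ₗ[ℝ] E))
    (hs : ∀ g ∈ s, ∀ u v : E, ⟪g u, g v⟫ = ⟪u, v⟫) :
    ∀ g ∈ Subgroup.closure s, ∀ u v : E, ⟪g u, g v⟫ = ⟪u, v⟫ := by
  intro g hg
  induction hg using Subgroup.closure_induction with
  | mem x hx => exact hs x hx
  | one => intro u v; rfl
  | mul x y hx hy ihx ihy =>
    intro u v
    have : (x * y) u = x (y u) := rfl
    rw [this, show (x * y) v = x (y v) from rfl, ihx, ihy]
  | inv x hx ih =>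
    intro u v
    have h1 : x (x⁻¹ u) = u := x.apply_symm_apply u
    have h2 : x (x⁻¹ v) = v := x.apply_symm_apply v
    calc ⟪x⁻¹ u, x⁻¹ v⟫ = ⟪x (x⁻¹ u), x (x⁻¹ v)⟫ := (ih _ _).symm
    _ = ⟪u, v⟫ := by rw [h1, h2]

lemma aux_closure_norm (s : Set (E ≃ₗ[ℝ] E))
    (hs : ∀ g ∈ s, ∀ u v : E, ⟪g u, g v⟫ = ⟪u, v⟫)
    (g : E ≃ₗ[ℝ] E) (hg : g ∈ Subgroup.closure s) (v : E) : ‖g v‖ = ‖v‖ := by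
  have h := aux_closure_inner s hs g hg v v
  rw [norm_eq_sqrt_real_inner (g v), norm_eq_sqrt_real_inner v, h]

lemma aux_r_inv_apply (r : E → (E ≃ₗ[ℝ] E))
    (hrfor : ∀ α v, r α v = v - (2 * ⟪v, α⟫ / ⟪α, α⟫) • α) (α v : E) :
    (r α)⁻¹ v = r α v := by
  apply (r α).injective
  rw [show ((r α)⁻¹ v) = (r α).symm v from rfl, (r α).apply_symm_apply]
  exact (aux_r_invol r hrfor α v).symm

lemma aux_maps (r : E → (E ≃ₗ[ℝ] E))
    (hrfor : ∀ α v, r α v = v - (2 * ⟪v, α⟫ / ⟪α, α⟫) • α) (s : Finset E) :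
    ∀ g ∈ Subgroup.closure {h : E ≃ₗ[ℝ] E | ∃ α ∈ s, h = r α},
      ∀ v ∈ Submodule.span ℝ (↑s : Set E), g v ∈ Submodule.span ℝ (↑s : Set E) := by
  have main : ∀ g ∈ Subgroup.closure {h : E ≃ₗ[ℝ] E | ∃ α ∈ s, h = r α},
      (∀ v ∈ Submodule.span ℝ (↑s : Set E), g v ∈ Submodule.span ℝ (↑s : Set E)) ∧
      (∀ v ∈ Submodule.span ℝ (↑s : Set E), g⁻¹ v ∈ Submodule.span ℝ (↑s : Set E)) := by
    intro g hg
    induction hg using Subgroup.closure_induction with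
    | mem x hx =>
      obtain ⟨α, hα, rfl⟩ := hx
      have hmem : (α : E) ∈ Submodule.span ℝ (↑s : Set E) :=
        Submodule.subset_span (by exact_mod_cast hα)
      constructor
      · intro v hv
        rw [hrfor]
        exact Submodule.sub_mem _ hv (Submodule.smul_mem _ _ hmem)
      · intro v hv
        rw [aux_r_inv_apply r hrfor, hrfor]
        exact Submodule.sub_mem _ hv (Submodule.smul_mem _ _ hmem)
    | one => exact ⟨fun v hv => hv, fun v hv => hv⟩
    | mul x y hx hy ihx ihy =>
      constructor
      · intro v hv
        exact ihx.1 _ (ihy.1 _ hv)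
      · intro v hv
        rw [show (x * y)⁻¹ v = y⁻¹ (x⁻¹ v) from by rw [mul_inv_rev]; rfl]
        exact ihy.2 _ (ihx.2 _ hv)
    | inv x hx ih =>
      refine ⟨ih.2, ?_⟩
      intro v hv
      rw [inv_inv]
      exact ih.1 _ hv
  exact fun g hg => (main g hg).1

lemma aux_fix (r : E → (E ≃ₗ[ℝ] E))
    (hrfor : ∀ α v, r α v = v - (2 * ⟪v, α⟫ / ⟪α, α⟫) • α) (s : Finset E) (x : E)
    (hx : ∀ α ∈ s, ⟪x, α⟫ = 0) :
    ∀ g ∈ Subgroup.closure {h : E ≃ₗ[ℝ] E | ∃ α ∈ s, h = r α}, g x = x := by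
  intro g hg
  induction hg using Subgroup.closure_induction with
  | mem g hgmem =>
    obtain ⟨α, hα, rfl⟩ := hgmem
    rw [hrfor, hx α hα]
    simp
  | one => rfl
  | mul a b ha hb iha ihb =>
    show a (b x) = x
    rw [ihb, iha]
  | inv a ha iha =>
    have : a⁻¹ (a x) = x := a.symm_apply_apply x
    rwa [iha] at this


lemma aux_exists_p (s : Finset E)
    (hli : LinearIndependent ℝ (fun x : (↑s : Set E) => (x : E))) :
    ∃ p : E, ∀ α ∈ s, 0 < ⟪p, α⟫ := by
  classical
  set V := Submodule.span ℝ (Set.range (fun x : (↑s : Set E) => (x : E))) with hV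
  haveI : FiniteDimensional ℝ V :=
    FiniteDimensional.span_of_finite ℝ (Set.finite_range _)
  let B : Module.Basis (↑s : Set E) ℝ V := Module.Basis.span hli
  let f : V →ₗ[ℝ] ℝ := ∑ i : (↑s : Set E), B.coord i
  have hf : ∀ i : (↑s : Set E), f (B i) = 1 := by
    intro i
    simp only [f, LinearMap.coe_sum, Finset.sum_apply, Module.Basis.coord_apply, Module.Basis.repr_self]
    rw [Finset.sum_eq_single i]
    · simp
    · intro j _ hj; simp [Finsupp.single_apply, (by simpa using hj.symm : ¬ i = j)]
    · intro h; exact absurd (Finset.mem_univ i) h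
  let fL : V →L[ℝ] ℝ := LinearMap.toContinuousLinearMap f
  let p₀ : V := (InnerProductSpace.toDual ℝ V).symm fL
  refine ⟨(p₀ : E), ?_⟩
  intro α hα
  have hmem : α ∈ (↑s : Set E) := by exact_mod_cast hα
  have hBi : ((B ⟨α, hmem⟩ : V) : E) = α := by
    rw [Module.Basis.span_apply]
  have h1 : ⟪p₀, B ⟨α, hmem⟩⟫ = fL (B ⟨α, hmem⟩) :=
    InnerProductSpace.toDual_symm_apply
  have h2 : ⟪p₀, B ⟨α, hmem⟩⟫ = ⟪(p₀ : E), ((B ⟨α, hmem⟩ : V) : E)⟫ := rfl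
  rw [h2, hBi] at h1
  rw [h1]
  show (0:ℝ) < f (B ⟨α, hmem⟩)
  rw [hf]
  norm_num

lemma aux_key (r : E → (E ≃ₗ[ℝ] E))
    (hrfor : ∀ α v, r α v = v - (2 * ⟪v, α⟫ / ⟪α, α⟫) • α) :
    ∀ n : ℕ, ∀ s : Finset E, s.card ≤ n →
      LinearIndependent ℝ (fun x : (↑s : Set E) => (x : E)) →
      ∀ y : E, ∃ g ∈ Subgroup.closure {h : E ≃ₗ[ℝ] E | ∃ α ∈ s, h = r α},
        ∀ α ∈ s, 0 ≤ ⟪g y, α⟫ := by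
  intro n
  induction n using Nat.strong_induction_on with
  | _ n IH =>
  intro s hcard hli y
  classical
  set Sgen : Set (E ≃ₗ[ℝ] E) := {h : E ≃ₗ[ℝ] E | ∃ α ∈ s, h = r α} with hSgen
  set G := Subgroup.closure Sgen with hG
  have hgen_inner : ∀ g ∈ Sgen, ∀ u v : E, ⟪g u, g v⟫ = ⟪u, v⟫ := by
    rintro g ⟨α, hα, rfl⟩ u v; exact aux_r_inner r hrfor α u v
  have hGinner := aux_closure_inner Sgen hgen_inner
  have hGnorm := aux_closure_norm Sgen hgen_inner
  set V := Submodule.span ℝ (↑s : Set E) with hV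
  haveI : FiniteDimensional ℝ V := FiniteDimensional.span_of_finite ℝ s.finite_toSet
  set y0 : E := (V.orthogonalProjectionOnto y : E) with hy0
  have hy0V : y0 ∈ V := (V.orthogonalProjectionOnto y).2
  have hyp_perp : ∀ α ∈ s, ⟪y - y0, α⟫ = 0 := by
    intro α hα
    have h1 : y - y0 ∈ Vᗮ := Submodule.sub_starProjection_mem_orthogonal (K := V) y
    have h2 : (α : E) ∈ V := Submodule.subset_span hα
    have := (Submodule.mem_orthogonal V (y - y0)).mp h1 α h2
    rw [real_inner_comm]; exact this
  suffices hsuf : ∃ g ∈ G, ∀ α ∈ s, 0 ≤ ⟪g y0, α⟫ by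
    obtain ⟨g, hgG, hgpos⟩ := hsuf
    refine ⟨g, hgG, fun α hα => ?_⟩
    have hfix : g (y - y0) = y - y0 := aux_fix r hrfor s (y - y0) hyp_perp g hgG
    have hgy : g y = g y0 + (y - y0) := by
      calc g y = g (y0 + (y - y0)) := by rw [add_sub_cancel]
      _ = g y0 + g (y - y0) := map_add _ _ _
      _ = g y0 + (y - y0) := by rw [hfix]
    rw [hgy, inner_add_left, hyp_perp α hα, add_zero]
    exact hgpos α hα
  set O : Set E := {x | ∃ g ∈ G, g y0 = x} with hO
  have hy0O : y0 ∈ O := ⟨1, Subgroup.one_mem G, rfl⟩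
  have hOV : O ⊆ (V : Set E) := by
    rintro x ⟨g, hg, rfl⟩; exact aux_maps r hrfor s g hg y0 hy0V
  have hOsph : ∀ x ∈ O, ‖x‖ = ‖y0‖ := by
    rintro x ⟨g, hg, rfl⟩; exact hGnorm g hg y0
  set K : Set E := ((fun v : V => (v : E)) '' (Metric.sphere (0 : V) ‖y0‖)) with hK
  have hKcomp : IsCompact K := (isCompact_sphere _ _).image continuous_subtype_val
  have hOK : O ⊆ K := by
    intro x hx
    refine ⟨⟨x, hOV hx⟩, ?_, rfl⟩
    rw [mem_sphere_zero_iff_norm]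
    exact hOsph x hx
  set X := closure O with hX
  have hXK : X ⊆ K := closure_minimal hOK hKcomp.isClosed
  have hXcomp : IsCompact X := hKcomp.of_isClosed_subset isClosed_closure hXK
  have hXne : X.Nonempty := ⟨y0, subset_closure hy0O⟩
  obtain ⟨p, hp⟩ := aux_exists_p s hli
  have hcont : ContinuousOn (fun x : E => ⟪p, x⟫) X :=
    (continuous_const.inner continuous_id).continuousOn
  obtain ⟨xs, hxsX, hmax⟩ := hXcomp.exists_isMaxOn hXne hcont
  have hrcont : ∀ α : E, Continuous (r α : E → E) := by
    intro α
    have hfun : (r α : E → E) = fun v => v - (2 * ⟪v, α⟫ / ⟪α, α⟫) • α := funext (hrfor α)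
    rw [hfun]
    exact continuous_id.sub
      (((continuous_const.mul (continuous_id.inner continuous_const)).div_const _).smul continuous_const)
  have hXstab : ∀ α ∈ s, ∀ x ∈ X, r α x ∈ X := by
    intro α hα x hx
    have h1 : r α '' O ⊆ O := by
      rintro _ ⟨z, ⟨g, hg, rfl⟩, rfl⟩
      exact ⟨r α * g, mul_mem (Subgroup.subset_closure ⟨α, hα, rfl⟩) hg, rfl⟩
    have h2 := image_closure_subset_closure_image (s := O) (hrcont α)
    exact closure_mono h1 (h2 ⟨x, hx, rfl⟩)
  have hxs_nonneg : ∀ α ∈ s, 0 ≤ ⟪xs, α⟫ := by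
    intro α hα
    by_contra hneg
    push_neg at hneg
    have hα0 : (α : E) ≠ 0 := hli.ne_zero ⟨α, hα⟩
    have hαα : 0 < ⟪α, α⟫ :=
      lt_of_le_of_ne real_inner_self_nonneg (Ne.symm (aux_inner_self_ne α hα0))
    have hmem := hXstab α hα xs hxsX
    have hle : ⟪p, r α xs⟫ ≤ ⟪p, xs⟫ := hmax hmem
    rw [hrfor, inner_sub_right, real_inner_smul_right] at hle
    have hppos := hp α hα
    have hc : 2 * ⟪xs, α⟫ / ⟪α, α⟫ < 0 := div_neg_of_neg_of_pos (by linarith) hαα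
    have := mul_neg_of_neg_of_pos hc hppos
    linarith
  set J : Finset E := s.filter (fun α => ⟪xs, α⟫ = 0) with hJ
  by_cases hJs : J = s
  · have hall : ∀ α ∈ s, ⟪xs, α⟫ = 0 := by
      intro α hα
      rw [← hJs] at hα
      exact (Finset.mem_filter.mp hα).2
    have hxsV : xs ∈ V := by
      obtain ⟨v, hv, rfl⟩ := hXK hxsX
      exact v.2
    have hxs0 : xs = 0 := by
      have hperp : ∀ v ∈ V, ⟪v, xs⟫ = 0 := by
        intro v hv
        induction hv using Submodule.span_induction with
        | mem z hz => rw [real_inner_comm]; exact hall z hz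
        | zero => simp
        | add a b _ _ iha ihb => rw [inner_add_left, iha, ihb]; norm_num
        | smul c a _ iha => rw [real_inner_smul_left, iha]; ring
      exact inner_self_eq_zero.mp (hperp xs hxsV)
    have hy00 : y0 = 0 := by
      obtain ⟨v, hv, heq⟩ := hXK hxsX
      rw [mem_sphere_zero_iff_norm] at hv
      have h1 : ‖xs‖ = ‖y0‖ := by rw [← heq]; exact hv
      rw [hxs0, norm_zero] at h1
      exact norm_eq_zero.mp h1.symm
    refine ⟨1, Subgroup.one_mem G, fun α hα => ?_⟩
    rw [show (1 : E ≃ₗ[ℝ] E) y0 = y0 from rfl, hy00]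
    simp
  · have hJsub : J ⊆ s := Finset.filter_subset _ _
    obtain ⟨α₀, hα₀s, hα₀J⟩ : ∃ α₀ ∈ s, α₀ ∉ J := by
      by_contra hcon
      push_neg at hcon
      exact hJs (Finset.Subset.antisymm hJsub hcon)
    have hJcard : J.card < n :=
      lt_of_lt_of_le (Finset.card_lt_card
        ((Finset.ssubset_iff_of_subset hJsub).mpr ⟨α₀, hα₀s, hα₀J⟩)) hcard
    have hsJne : (s \ J).Nonempty := ⟨α₀, Finset.mem_sdiff.mpr ⟨hα₀s, hα₀J⟩⟩
    set T := (s \ J).image (fun α => ⟪xs, α⟫) with hT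
    have hTne : T.Nonempty := hsJne.image _
    set δ := T.min' hTne with hδ
    have hδpos : 0 < δ := by
      obtain ⟨α, hα, hval⟩ := Finset.mem_image.mp (T.min'_mem hTne)
      have hαs := (Finset.mem_sdiff.mp hα).1
      have hαJ := (Finset.mem_sdiff.mp hα).2
      have hne : ⟪xs, α⟫ ≠ 0 := fun h0 => hαJ (Finset.mem_filter.mpr ⟨hαs, h0⟩)
      rw [hδ, ← hval]
      exact lt_of_le_of_ne (hxs_nonneg α hαs) (Ne.symm hne)
    have hδle : ∀ α ∈ s, α ∉ J → δ ≤ ⟪xs, α⟫ := fun α hα hαJ =>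
      T.min'_le _ (Finset.mem_image_of_mem _ (Finset.mem_sdiff.mpr ⟨hα, hαJ⟩))
    have hsne : s.Nonempty := ⟨α₀, hα₀s⟩
    set M := ((s.image fun α => ‖α‖).max' (hsne.image _)) + 1 with hM
    have hMpos : 0 < M := by
      have h0 : (0:ℝ) ≤ (s.image fun α => ‖α‖).max' (hsne.image _) :=
        le_trans (norm_nonneg α₀) (Finset.le_max' _ _ (Finset.mem_image_of_mem _ hα₀s))
      rw [hM]; linarith
    have hMlt : ∀ α ∈ s, ‖α‖ < M := fun α hα =>
      lt_of_le_of_lt (Finset.le_max' _ _ (Finset.mem_image_of_mem _ hα)) (lt_add_one _)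
    obtain ⟨z, hzO, hdist⟩ := Metric.mem_closure_iff.mp hxsX (δ / M) (div_pos hδpos hMpos)
    obtain ⟨g, hgG, rfl⟩ := hzO
    have hliJ : LinearIndependent ℝ (fun x : (↑J : Set E) => (x : E)) :=
      linearIndependent_subtype_iff.mpr ((linearIndependent_subtype_iff.mp hli).mono (by exact_mod_cast hJsub))
    obtain ⟨g', hg'cl, hg'pos⟩ := IH J.card hJcard J le_rfl hliJ (g y0)
    have hg'G : g' ∈ G := by
      refine Subgroup.closure_mono ?_ hg'cl
      rintro h ⟨α, hα, rfl⟩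
      exact ⟨α, hJsub hα, rfl⟩
    have hg'fix : g' xs = xs :=
      aux_fix r hrfor J xs (fun α hα => (Finset.mem_filter.mp hα).2) g' hg'cl
    refine ⟨g' * g, mul_mem hg'G hgG, ?_⟩
    intro α hα
    have happly : (g' * g) y0 = g' (g y0) := rfl
    rw [happly]
    by_cases hαJ : α ∈ J
    · exact hg'pos α hαJ
    · have hnormpres : ‖g' (g y0) - xs‖ = ‖g y0 - xs‖ := by
        conv_lhs => rw [← hg'fix]
        rw [← map_sub]
        exact hGnorm g' hg'G _
      have hbound : |⟪g' (g y0) - xs, α⟫| ≤ ‖g' (g y0) - xs‖ * ‖α‖ := abs_real_inner_le_norm _ _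
      have hdist' : ‖g y0 - xs‖ < δ / M := by
        rw [← dist_eq_norm, dist_comm]
        exact hdist
      have h1 : ‖g y0 - xs‖ * ‖α‖ < δ := by
        calc ‖g y0 - xs‖ * ‖α‖ ≤ ‖g y0 - xs‖ * M :=
              mul_le_mul_of_nonneg_left (le_of_lt (hMlt α hα)) (norm_nonneg _)
          _ < (δ / M) * M := mul_lt_mul_of_pos_right hdist' hMpos
          _ = δ := div_mul_cancel₀ δ (ne_of_gt hMpos)
      have habs : |⟪g' (g y0) - xs, α⟫| < δ := by
        rw [hnormpres] at hbound
        exact lt_of_le_of_lt hbound h1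
      have h2 := hδle α hα hαJ
      have h3 := (abs_lt.mp habs).1
      have hinner : ⟪g' (g y0), α⟫ = ⟪g' (g y0) - xs, α⟫ + ⟪xs, α⟫ := by
        rw [inner_sub_left]; ring
      rw [hinner]
      linarith

end AuxSection14

/-- let `Λwt` be a finite `W`-stable set of weights with highest weight `λ₀`
(every `λ ∈ Λwt` is `λ₀` minus a non-negative integral combination of the simple roots `Δ`), and
`Z = {α ∈ Δ : (λ₀|α) = 0}`. Then the cone `C_∅ = {u : ⟨λ₀ - λ, u⟩ ≥ 0 ∀ λ ∈ Λwt}` in the dual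
space equals the union of the closed Weyl chambers `𝔠(w(Δ))` over all `w ∈ W` with
`w(λ₀) = λ₀`; equivalently, over all `w` in the subgroup generated by the reflections `r_α`,
`α ∈ Z`. -/
theorem cone_eq_union_of_chambers_fixing_highest_weight
    {E : Type*} [NormedAddCommGroup E] [InnerProductSpace ℝ E]
    (Δ : Finset E)
    (hind : LinearIndependent ℝ (fun α : ↥Δ => (α : E)))
    (W : Subgroup (E ≃ₗ[ℝ] E))
    (hWinner : ∀ w ∈ W, ∀ u v : E, ⟪w u, w v⟫ = ⟪u, v⟫)
    (Λwt : Finset E)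
    (hstab : ∀ w ∈ W, ∀ lam ∈ Λwt, w lam ∈ Λwt)
    (lam0 : E) (hlam0 : lam0 ∈ Λwt)
    (hdom : ∀ α ∈ Δ, 0 ≤ ⟪lam0, α⟫)
    (hhigh : ∀ lam ∈ Λwt, ∃ c : E → ℕ, lam0 - lam = ∑ α ∈ Δ, (c α : ℝ) • α)
    (hsupp : ∀ α ∈ Δ, ⟪lam0, α⟫ ≠ 0 →
      ∃ lam ∈ Λwt, ∃ m : ℕ, 0 < m ∧ lam0 - lam = (m : ℝ) • α)
    (r : E → (E ≃ₗ[ℝ] E))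
    (hrfor : ∀ α v, r α v = v - (2 * ⟪v, α⟫ / ⟪α, α⟫) • α)
    (hrW : ∀ α ∈ Δ, r α ∈ W) :
    ∀ u : E →ₗ[ℝ] ℝ,
      ((∀ lam ∈ Λwt, 0 ≤ u (lam0 - lam)) ↔
        (∃ w ∈ W, w lam0 = lam0 ∧ ∀ α ∈ Δ, 0 ≤ u (w α))) ∧
      ((∀ lam ∈ Λwt, 0 ≤ u (lam0 - lam)) ↔
        (∃ w ∈ Subgroup.closure {g : E ≃ₗ[ℝ] E | ∃ α ∈ Δ, ⟪lam0, α⟫ = 0 ∧ g = r α},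
          ∀ α ∈ Δ, 0 ≤ u (w α))) := by
  intro u
  classical
  set SΔ : Set (E ≃ₗ[ℝ] E) := {g : E ≃ₗ[ℝ] E | ∃ α ∈ Δ, ⟪lam0, α⟫ = 0 ∧ g = r α} with hSΔ
  have hfact : ∀ g ∈ Subgroup.closure SΔ, g ∈ W ∧ g lam0 = lam0 := by
    intro g hg
    induction hg using Subgroup.closure_induction with
    | mem x hx =>
      obtain ⟨α, hα, hperp, rfl⟩ := hx
      refine ⟨hrW α hα, ?_⟩
      rw [hrfor, hperp]
      simp
    | one => exact ⟨Subgroup.one_mem W, rfl⟩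
    | mul a b _ _ iha ihb =>
      refine ⟨mul_mem iha.1 ihb.1, ?_⟩
      show a (b lam0) = lam0
      rw [ihb.2, iha.2]
    | inv a _ iha =>
      refine ⟨inv_mem iha.1, ?_⟩
      have h := a.symm_apply_apply lam0
      have h2 : a⁻¹ (a lam0) = lam0 := h
      rwa [iha.2] at h2
  have hBA : (∃ w ∈ W, w lam0 = lam0 ∧ ∀ α ∈ Δ, 0 ≤ u (w α)) →
      (∀ lam ∈ Λwt, 0 ≤ u (lam0 - lam)) := by
    rintro ⟨w, hwW, hwfix, hwpos⟩ lam hlam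
    obtain ⟨c, hc⟩ := hhigh (w⁻¹ lam) (hstab w⁻¹ (inv_mem hwW) lam hlam)
    have hw : lam0 - lam = ∑ α ∈ Δ, (c α : ℝ) • w α := by
      have h1 : w (lam0 - w⁻¹ lam) = lam0 - lam := by
        have h0 : w (w⁻¹ lam) = lam := w.apply_symm_apply lam
        rw [map_sub, hwfix, h0]
      have h2 : w (∑ α ∈ Δ, (c α : ℝ) • α) = ∑ α ∈ Δ, (c α : ℝ) • w α := by
        rw [map_sum]
        exact Finset.sum_congr rfl fun α _ => map_smul w _ _
      rw [← h1, hc, h2]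
    rw [hw, map_sum]
    apply Finset.sum_nonneg
    intro α hα
    rw [map_smul, smul_eq_mul]
    exact mul_nonneg (Nat.cast_nonneg _) (hwpos α hα)
  have hAC : (∀ lam ∈ Λwt, 0 ≤ u (lam0 - lam)) →
      ∃ w ∈ Subgroup.closure SΔ, ∀ α ∈ Δ, 0 ≤ u (w α) := by
    intro hA
    set Z : Finset E := Δ.filter (fun α => ⟪lam0, α⟫ = 0) with hZ
    have hsetEq : SΔ = {h : E ≃ₗ[ℝ] E | ∃ α ∈ Z, h = r α} := by
      ext h
      constructor
      · rintro ⟨α, hα, hperp, rfl⟩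
        exact ⟨α, Finset.mem_filter.mpr ⟨hα, hperp⟩, rfl⟩
      · rintro ⟨α, hα, rfl⟩
        exact ⟨α, (Finset.mem_filter.mp hα).1, (Finset.mem_filter.mp hα).2, rfl⟩
    have hindΔ : LinearIndependent ℝ (fun x : (↑Δ : Set E) => (x : E)) := hind
    have hliZ : LinearIndependent ℝ (fun x : (↑Z : Set E) => (x : E)) :=
      linearIndependent_subtype_iff.mpr ((linearIndependent_subtype_iff.mp hindΔ).mono (by exact_mod_cast Finset.filter_subset _ _))
    set V := Submodule.span ℝ (↑Z : Set E) with hV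
    haveI : FiniteDimensional ℝ V := FiniteDimensional.span_of_finite ℝ Z.finite_toSet
    let fL : V →L[ℝ] ℝ := LinearMap.toContinuousLinearMap (u.comp V.subtype)
    let y0 : V := (InnerProductSpace.toDual ℝ V).symm fL
    have hy : ∀ v, ∀ hv : v ∈ V, ⟪(y0 : E), v⟫ = u v := by
      intro v hv
      have h1 : ⟪y0, (⟨v, hv⟩ : V)⟫ = fL ⟨v, hv⟩ := InnerProductSpace.toDual_symm_apply
      exact h1
    obtain ⟨g, hgcl, hgpos⟩ := aux_key r hrfor Z.card Z le_rfl hliZ (y0 : E)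
    have hgclS : g ∈ Subgroup.closure SΔ := by rw [hsetEq]; exact hgcl
    refine ⟨g⁻¹, inv_mem hgclS, ?_⟩
    intro α hα
    by_cases hperp : ⟪lam0, α⟫ = 0
    · have hαZ : α ∈ Z := Finset.mem_filter.mpr ⟨hα, hperp⟩
      have hginvV : g⁻¹ α ∈ V :=
        aux_maps r hrfor Z g⁻¹ (inv_mem hgcl) α (Submodule.subset_span hαZ)
      have h1 : u (g⁻¹ α) = ⟪(y0 : E), g⁻¹ α⟫ := (hy _ hginvV).symm
      have hgen_inner : ∀ h ∈ {h : E ≃ₗ[ℝ] E | ∃ α ∈ Z, h = r α},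
          ∀ a b : E, ⟪h a, h b⟫ = ⟪a, b⟫ := by
        rintro h ⟨β, _, rfl⟩ a b
        exact aux_r_inner r hrfor β a b
      have h2 : ⟪(y0 : E), g⁻¹ α⟫ = ⟪g (y0 : E), g (g⁻¹ α)⟫ :=
        (aux_closure_inner _ hgen_inner g hgcl _ _).symm
      have h4 : g (g⁻¹ α) = α := g.apply_symm_apply α
      rw [h1, h2, h4]
      exact hgpos α hαZ
    · obtain ⟨lam, hlam, m, hm, heq⟩ := hsupp α hα hperp
      obtain ⟨hW', hfix'⟩ := hfact g⁻¹ (inv_mem hgclS)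
      have hlam' : g⁻¹ lam ∈ Λwt := hstab g⁻¹ hW' lam hlam
      have h3 : g⁻¹ (lam0 - lam) = g⁻¹ ((m : ℝ) • α) := by rw [heq]
      rw [map_sub, hfix', map_smul] at h3
      have hApplied := hA _ hlam'
      rw [h3, map_smul, smul_eq_mul] at hApplied
      have hmpos : (0 : ℝ) < m := by exact_mod_cast hm
      nlinarith [hApplied]
  have hCB : (∃ w ∈ Subgroup.closure SΔ, ∀ α ∈ Δ, 0 ≤ u (w α)) →
      (∃ w ∈ W, w lam0 = lam0 ∧ ∀ α ∈ Δ, 0 ≤ u (w α)) := by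
    rintro ⟨w, hw, hpos⟩
    obtain ⟨h1, h2⟩ := hfact w hw
    exact ⟨w, h1, h2, hpos⟩
  exact ⟨⟨fun hA => hCB (hAC hA), hBA⟩, ⟨hAC, fun hC => hBA (hCB hC)⟩⟩
end
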